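/- arXiv:2502.13238 — 5 statements merged into one kernel-verified Lean document; each statement's English description precedes it below -/
import Mathlib

section
/- Fix 0 ≤ β < 1 and h ≠ 0, and let π be the unique real solution of x = tanh(βx + h). Then there exists a constant C > 0 (depending only on β and h) such that for every n ≥ 1, |E_{β,h,n}[W_1] − π| ≤ C/n, where W = (W_1,…,W_n) is distributed according to the Curie–Weiss model with parameters (β,h) on n sites. -/
open MeasureTheory Real

/-- Spin value of a Boolean: `true ↦ 1`, `false ↦ -1`. -/
noncomputable def spin (b : Bool) : ℝ := if b then 1 else -1

/-- Unnormalized Curie–Weiss weight of a configuration. -/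
noncomputable def cwWeight (n : ℕ) (β h : ℝ) (w : Fin n → Bool) : ℝ :=
  Real.exp ((β / n) * ∑ i : Fin n, ∑ j : Fin n,
      (if i < j then spin (w i) * spin (w j) else 0)
    + h * ∑ i : Fin n, spin (w i))

/-- Curie–Weiss probability of a configuration. -/
noncomputable def cwProb (n : ℕ) (β h : ℝ) (w : Fin n → Bool) : ℝ :=
  cwWeight n β h w / ∑ w' : Fin n → Bool, cwWeight n β h w'

namespace CWaux


lemma tanh_hasDeriv (x : ℝ) : HasDerivAt Real.tanh (1 / Real.cosh x ^ 2) x := by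
  have h := (Real.hasDerivAt_sinh x).div (Real.hasDerivAt_cosh x) (ne_of_gt (Real.cosh_pos x))
  have e : (Real.cosh x * Real.cosh x - Real.sinh x * Real.sinh x) / Real.cosh x ^ 2
      = 1 / Real.cosh x ^ 2 := by
    rw [show Real.cosh x * Real.cosh x - Real.sinh x * Real.sinh x
        = Real.cosh x ^ 2 - Real.sinh x ^ 2 by ring, Real.cosh_sq_sub_sinh_sq]
  rw [e] at h
  have ht : Real.tanh = Real.sinh / Real.cosh := by
    funext y
    exact Real.tanh_eq_sinh_div_cosh y
  rw [ht]; exact h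

lemma tanh_mono : StrictMono Real.tanh :=
  strictMono_of_deriv_pos (fun x => by rw [(tanh_hasDeriv x).deriv]; positivity)

lemma tanh_lip (a b : ℝ) : |Real.tanh a - Real.tanh b| ≤ |a - b| := by
  have := Convex.norm_image_sub_le_of_norm_hasDerivWithin_le
    (f := Real.tanh) (f' := fun x => 1 / Real.cosh x ^ 2) (s := Set.univ) (C := 1)
    (fun x _ => (tanh_hasDeriv x).hasDerivWithinAt) ?_ convex_univ (Set.mem_univ b) (Set.mem_univ a)
  · simpa using this
  · intro x _
    rw [Real.norm_eq_abs, abs_of_pos (by positivity)]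
    rw [div_le_one (by positivity)]
    nlinarith [Real.one_le_cosh x]

lemma tanh_pair_nonneg (a b : ℝ) : 0 ≤ (Real.tanh a - Real.tanh b) * (a - b) := by
  rcases le_total a b with hab | hab
  · have := tanh_mono.monotone hab
    nlinarith
  · have := tanh_mono.monotone hab
    nlinarith

lemma abs_sinh_lt_cosh (x : ℝ) : |Real.sinh x| < Real.cosh x := by
  rw [abs_lt]
  constructor
  · have := Real.sinh_lt_cosh (-x); rw [Real.sinh_neg, Real.cosh_neg] at this; linarith
  · exact Real.sinh_lt_cosh x

/-- derivative of `x ↦ tanh (β x + h)` -/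
lemma g_hasDeriv (β h x : ℝ) :
    HasDerivAt (fun x => Real.tanh (β * x + h)) (β / Real.cosh (β * x + h) ^ 2) x := by
  have hi : HasDerivAt (fun x : ℝ => β * x + h) β x := by
    simpa using ((hasDerivAt_id x).const_mul β).add_const h
  have := (tanh_hasDeriv (β * x + h)).comp x hi
  exact this.congr_deriv (by ring)

/-- derivative of `gd := x ↦ β / cosh (β x + h)^2` -/
lemma gd_hasDeriv (β h x : ℝ) :
    HasDerivAt (fun x => β / Real.cosh (β * x + h) ^ 2)
      (-(β * (2 * Real.cosh (β * x + h) * (Real.sinh (β * x + h) * β))) / (Real.cosh (β * x + h) ^ 2) ^ 2) x := by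
  have hi : HasDerivAt (fun x : ℝ => β * x + h) β x := by
    simpa using ((hasDerivAt_id x).const_mul β).add_const h
  have hc : HasDerivAt (fun x : ℝ => Real.cosh (β * x + h)) (Real.sinh (β * x + h) * β) x :=
    by have := (Real.hasDerivAt_cosh (β * x + h)).comp x hi; exact this
  have hq : HasDerivAt (fun x : ℝ => Real.cosh (β * x + h) ^ 2)
      (2 * Real.cosh (β * x + h) ^ 1 * (Real.sinh (β * x + h) * β)) x := hc.pow 2
  have hd := (hasDerivAt_const x β).div hq (by positivity)
  exact hd.congr_deriv (by ring)

lemma abs_sub_right_of_uIcc {x y z : ℝ} (hz : z ∈ Set.uIcc x y) : |z - y| ≤ |x - y| := by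
  rcases le_total x y with hxy | hxy
  · rw [Set.uIcc_of_le hxy] at hz
    rw [abs_of_nonpos (by linarith [hz.2]), abs_of_nonpos (by linarith)]
    linarith [hz.1]
  · rw [Set.uIcc_of_ge hxy] at hz
    rw [abs_of_nonneg (by linarith [hz.1]), abs_of_nonneg (by linarith)]
    linarith [hz.2]

lemma gd_lip (β h a b : ℝ) :
    |β / Real.cosh (β*a+h)^2 - β / Real.cosh (β*b+h)^2| ≤ 2*β^2 * |a - b| := by
  have := Convex.norm_image_sub_le_of_norm_hasDerivWithin_le
    (f := fun x => β / Real.cosh (β*x+h)^2)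
    (f' := fun x => -(β * (2 * Real.cosh (β * x + h) * (Real.sinh (β * x + h) * β))) / (Real.cosh (β * x + h) ^ 2) ^ 2)
    (s := Set.univ) (C := 2*β^2)
    (fun x _ => (gd_hasDeriv β h x).hasDerivWithinAt) ?_ convex_univ (Set.mem_univ b) (Set.mem_univ a)
  · simpa [abs_sub_comm] using this
  · intro x _
    have hc := Real.cosh_pos (β*x+h)
    have h1 := Real.one_le_cosh (β*x+h)
    have hs := abs_lt.1 (abs_sinh_lt_cosh (β*x+h))
    have hD : (0:ℝ) < (Real.cosh (β*x+h) ^ 2) ^ 2 := by positivity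
    rw [Real.norm_eq_abs, abs_div, abs_of_pos hD, div_le_iff₀ hD]
    apply abs_le.2
    constructor <;>
      nlinarith [sq_nonneg β, mul_nonneg (mul_nonneg (sq_nonneg β) hc.le) (sub_nonneg.2 hs.2.le),
        mul_nonneg (mul_nonneg (sq_nonneg β) hc.le) (by linarith : (0:ℝ) ≤ Real.sinh (β*x+h) + Real.cosh (β*x+h)),
        sq_nonneg (Real.cosh (β*x+h)), sq_nonneg (Real.cosh (β*x+h) - 1), sq_nonneg (Real.cosh (β*x+h) + 1),
        mul_le_mul_of_nonneg_left (sq_nonneg (Real.cosh (β*x+h)^2 - 1)) (sq_nonneg β)]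

lemma g_taylor (β h x y : ℝ) :
    |Real.tanh (β*x+h) - Real.tanh (β*y+h) - (β / Real.cosh (β*y+h)^2) * (x - y)| ≤ 2*β^2 * (x-y)^2 := by
  set d := β / Real.cosh (β*y+h)^2 with hd
  have key := Convex.norm_image_sub_le_of_norm_hasDerivWithin_le
    (f := fun z => Real.tanh (β*z+h) - d * z)
    (f' := fun z => β / Real.cosh (β*z+h)^2 - d)
    (s := Set.uIcc x y) (C := 2*β^2 * |x - y|)
    (fun z _ => ((g_hasDeriv β h z).sub (by simpa using (hasDerivAt_id z).const_mul d)).hasDerivWithinAt)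
    ?_ (convex_uIcc x y) Set.right_mem_uIcc Set.left_mem_uIcc
  · rw [Real.norm_eq_abs, Real.norm_eq_abs] at key
    calc |Real.tanh (β*x+h) - Real.tanh (β*y+h) - d * (x - y)|
        = |(Real.tanh (β*x+h) - d * x) - (Real.tanh (β*y+h) - d * y)| := by ring_nf
      _ ≤ 2*β^2 * |x - y| * |x - y| := key
      _ = 2*β^2 * (x-y)^2 := by rw [mul_assoc, abs_mul_abs_self]; ring
  · intro z hz
    rw [Real.norm_eq_abs]
    calc |β / Real.cosh (β*z+h)^2 - d| ≤ 2*β^2 * |z - y| := gd_lip β h z y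
      _ ≤ 2*β^2 * |x - y| := by
          have := abs_sub_right_of_uIcc hz
          nlinarith [sq_nonneg β]

lemma tanh_cov_term (c d a b : ℝ) (hc : 0 ≤ c) (hab : a - b = c * d) :
    (Real.tanh a - Real.tanh b) * d ≤ c * d^2 := by
  rcases eq_or_lt_of_le hc with hc0 | hc0
  · have hab' : a = b := by
      have : a - b = 0 := by rw [← hc0] at hab; linarith
      linarith
    rw [hab', ← hc0]
    simp
  · set t := Real.tanh a - Real.tanh b with ht
    have h1 : 0 ≤ t * (c * d) := by rw [← hab]; exact tanh_pair_nonneg a b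
    have h2 : t^2 ≤ c^2 * d^2 := by
      have hl := tanh_lip a b
      have h3 : t^2 ≤ (a-b)^2 := by
        rw [← sq_abs t, ← sq_abs (a-b)]
        exact pow_le_pow_left₀ (abs_nonneg _) hl 2
      calc t^2 ≤ (a-b)^2 := h3
        _ = c^2 * d^2 := by rw [hab]; ring
    have htd : 0 ≤ t * d := by nlinarith
    have hsq : (t*d)^2 ≤ (c*d^2)^2 := by nlinarith [sq_nonneg d]
    nlinarith [hsq, htd, mul_nonneg hc (sq_nonneg d)]

variable (n : ℕ) (β h : ℝ)

lemma Zpos : 0 < ∑ w' : Fin n → Bool, cwWeight n β h w' :=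
  Finset.sum_pos (fun w _ => Real.exp_pos _) Finset.univ_nonempty

lemma cwProb_nonneg (w : Fin n → Bool) : 0 ≤ cwProb n β h w :=
  div_nonneg (Real.exp_pos _).le (Zpos n β h).le

lemma sum_cwProb : ∑ w : Fin n → Bool, cwProb n β h w = 1 := by
  simp only [cwProb]
  rw [← Finset.sum_div, div_self (Zpos n β h).ne']

noncomputable def Ex (f : (Fin n → Bool) → ℝ) : ℝ := ∑ w : Fin n → Bool, cwProb n β h w * f w

lemma Ex_add (f g : (Fin n → Bool) → ℝ) :
    Ex n β h (fun w => f w + g w) = Ex n β h f + Ex n β h g := by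
  simp [Ex, mul_add, Finset.sum_add_distrib]

lemma Ex_sub (f g : (Fin n → Bool) → ℝ) :
    Ex n β h (fun w => f w - g w) = Ex n β h f - Ex n β h g := by
  simp [Ex, mul_sub, Finset.sum_sub_distrib]

lemma Ex_const (c : ℝ) : Ex n β h (fun _ => c) = c := by
  simp only [Ex, ← Finset.sum_mul, sum_cwProb, one_mul]

lemma Ex_const_mul (c : ℝ) (f : (Fin n → Bool) → ℝ) :
    Ex n β h (fun w => c * f w) = c * Ex n β h f := by
  simp only [Ex, Finset.mul_sum]
  exact Finset.sum_congr rfl fun w _ => by ring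

lemma Ex_mono {f g : (Fin n → Bool) → ℝ} (hfg : ∀ w, f w ≤ g w) : Ex n β h f ≤ Ex n β h g :=
  Finset.sum_le_sum fun w _ => mul_le_mul_of_nonneg_left (hfg w) (cwProb_nonneg n β h w)

lemma abs_Ex_le (f : (Fin n → Bool) → ℝ) : |Ex n β h f| ≤ Ex n β h (fun w => |f w|) := by
  refine (Finset.abs_sum_le_sum_abs _ _).trans ?_
  refine Finset.sum_le_sum fun w _ => ?_
  rw [abs_mul, abs_of_nonneg (cwProb_nonneg n β h w)]

lemma Ex_sum {ι : Type*} (s : Finset ι) (f : ι → (Fin n → Bool) → ℝ) :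
    Ex n β h (fun w => ∑ i ∈ s, f i w) = ∑ i ∈ s, Ex n β h (f i) := by
  simp only [Ex, Finset.mul_sum]
  exact Finset.sum_comm

noncomputable def Cov (f g : (Fin n → Bool) → ℝ) : ℝ :=
  Ex n β h (fun w => f w * g w) - Ex n β h f * Ex n β h g

lemma double (f g : (Fin n → Bool) → ℝ) :
    ∑ w : Fin n → Bool, ∑ w' : Fin n → Bool,
      cwProb n β h w * cwProb n β h w' * ((f w - f w') * (g w - g w'))
      = 2 * Cov n β h f g := by
  have key : ∀ w w', cwProb n β h w * cwProb n β h w' * ((f w - f w') * (g w - g w'))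
      = (cwProb n β h w * (f w * g w)) * cwProb n β h w'
        + cwProb n β h w * (cwProb n β h w' * (f w' * g w'))
        - (cwProb n β h w * f w) * (cwProb n β h w' * g w')
        - (cwProb n β h w * g w) * (cwProb n β h w' * f w') := by intros; ring
  simp only [key, Finset.sum_sub_distrib, Finset.sum_add_distrib,
    ← Finset.mul_sum, ← Finset.sum_mul, sum_cwProb]
  simp only [Cov, Ex]
  ring

lemma var_nonneg (f : (Fin n → Bool) → ℝ) : 0 ≤ Cov n β h f f := by
  have := double n β h f f
  have hQ : 0 ≤ ∑ w : Fin n → Bool, ∑ w' : Fin n → Bool,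
      cwProb n β h w * cwProb n β h w' * ((f w - f w') * (f w - f w')) := by
    refine Finset.sum_nonneg fun w _ => Finset.sum_nonneg fun w' _ => ?_
    exact mul_nonneg (mul_nonneg (cwProb_nonneg n β h w) (cwProb_nonneg n β h w'))
      (mul_self_nonneg _)
  linarith

lemma cov_le_of_pair {F G : (Fin n → Bool) → ℝ} {L : ℝ}
    (hL : ∀ w w', (F w - F w') * (G w - G w') ≤ L * ((G w - G w') * (G w - G w'))) :
    Cov n β h F G ≤ L * Cov n β h G G := by
  have h1 := double n β h F G
  have h2 := double n β h G G
  have hQ : ∑ w : Fin n → Bool, ∑ w' : Fin n → Bool,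
      cwProb n β h w * cwProb n β h w' * ((F w - F w') * (G w - G w'))
      ≤ L * ∑ w : Fin n → Bool, ∑ w' : Fin n → Bool,
      cwProb n β h w * cwProb n β h w' * ((G w - G w') * (G w - G w')) := by
    rw [Finset.mul_sum]
    refine Finset.sum_le_sum fun w _ => ?_
    rw [Finset.mul_sum]
    refine Finset.sum_le_sum fun w' _ => ?_
    have hp := mul_nonneg (cwProb_nonneg n β h w) (cwProb_nonneg n β h w')
    calc cwProb n β h w * cwProb n β h w' * ((F w - F w') * (G w - G w'))
        ≤ cwProb n β h w * cwProb n β h w' * (L * ((G w - G w') * (G w - G w'))) :=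
          mul_le_mul_of_nonneg_left (hL w w') hp
      _ = L * (cwProb n β h w * cwProb n β h w' * ((G w - G w') * (G w - G w'))) := by ring
  rw [h1, h2] at hQ
  nlinarith [hQ]


lemma spin_cases (b : Bool) : spin b = 1 ∨ spin b = -1 := by cases b <;> simp [spin]
lemma spin_not (b : Bool) : spin (!b) = - spin b := by cases b <;> simp [spin]
lemma spin_sq (b : Bool) : spin b * spin b = 1 := by cases b <;> simp [spin]
lemma abs_spin (b : Bool) : |spin b| = 1 := by cases b <;> simp [spin]

noncomputable def Soth (i0 : Fin n) (w : Fin n → Bool) : ℝ :=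
  ∑ j : Fin n, if j = i0 then 0 else spin (w j)

noncomputable def pairOth (i0 : Fin n) (w : Fin n → Bool) : ℝ :=
  ∑ i : Fin n, ∑ j : Fin n,
    if i < j ∧ i ≠ i0 ∧ j ≠ i0 then spin (w i) * spin (w j) else 0

lemma sum_split (i0 : Fin n) (w : Fin n → Bool) :
    ∑ i : Fin n, spin (w i) = spin (w i0) + Soth n i0 w := by
  have key : ∀ j : Fin n, spin (w j)
      = (if j = i0 then spin (w j) else 0) + (if j = i0 then 0 else spin (w j)) := by
    intro j; by_cases hj : j = i0 <;> simp [hj]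
  rw [Finset.sum_congr rfl fun j _ => key j, Finset.sum_add_distrib, Soth]
  congr 1
  simp

lemma pair_split (i0 : Fin n) (w : Fin n → Bool) :
    ∑ i : Fin n, ∑ j : Fin n, (if i < j then spin (w i) * spin (w j) else 0)
      = pairOth n i0 w + spin (w i0) * Soth n i0 w := by
  have point : ∀ i j : Fin n, (if i < j then spin (w i) * spin (w j) else 0)
      = (if i < j ∧ i ≠ i0 ∧ j ≠ i0 then spin (w i) * spin (w j) else 0)
        + ((if i = i0 then (if i0 < j then spin (w i0) * spin (w j) else 0) else 0)
        + (if j = i0 then (if i < i0 then spin (w i) * spin (w i0) else 0) else 0)) := by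
    intro i j
    by_cases h1 : i = i0 <;> by_cases h2 : j = i0 <;> simp [h1, h2]
  rw [Finset.sum_congr rfl fun i _ => Finset.sum_congr rfl fun j _ => point i j]
  simp only [Finset.sum_add_distrib]
  congr 1
  have e1 : ∑ i : Fin n, ∑ j : Fin n,
      (if i = i0 then (if i0 < j then spin (w i0) * spin (w j) else 0) else 0)
      = ∑ j : Fin n, (if i0 < j then spin (w i0) * spin (w j) else 0) := by
    rw [Finset.sum_comm]
    refine Finset.sum_congr rfl fun j _ => ?_
    simp
  have e2 : ∑ i : Fin n, ∑ j : Fin n,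
      (if j = i0 then (if i < i0 then spin (w i) * spin (w i0) else 0) else 0)
      = ∑ i : Fin n, (if i < i0 then spin (w i) * spin (w i0) else 0) := by
    refine Finset.sum_congr rfl fun i _ => ?_
    simp
  rw [e1, e2]
  have e3 : ∀ j : Fin n, (if i0 < j then spin (w i0) * spin (w j) else 0)
      + (if j < i0 then spin (w j) * spin (w i0) else 0)
      = spin (w i0) * (if j = i0 then 0 else spin (w j)) := by
    intro j
    rcases lt_trichotomy j i0 with hj | hj | hj
    · rw [if_neg (asymm hj), if_pos hj, if_neg (ne_of_lt hj)]; ring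
    · subst hj; simp
    · rw [if_pos hj, if_neg (asymm hj), if_neg (ne_of_gt hj)]; ring
  calc (∑ j : Fin n, if i0 < j then spin (w i0) * spin (w j) else 0)
        + ∑ i : Fin n, (if i < i0 then spin (w i) * spin (w i0) else 0)
      = ∑ j : Fin n, ((if i0 < j then spin (w i0) * spin (w j) else 0)
          + (if j < i0 then spin (w j) * spin (w i0) else 0)) := by
        rw [Finset.sum_add_distrib]
    _ = ∑ j : Fin n, spin (w i0) * (if j = i0 then 0 else spin (w j)) := by
        exact Finset.sum_congr rfl fun j _ => e3 j
    _ = spin (w i0) * Soth n i0 w := by rw [Soth, Finset.mul_sum]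

noncomputable def Cfun (i0 : Fin n) (w : Fin n → Bool) : ℝ :=
  (β / n) * pairOth n i0 w + h * Soth n i0 w

lemma weight_eq (i0 : Fin n) (w : Fin n → Bool) :
    cwWeight n β h w
      = Real.exp (Cfun n β h i0 w + spin (w i0) * ((β / n) * Soth n i0 w + h)) := by
  rw [cwWeight, pair_split n i0 w, sum_split n i0 w, Cfun]
  congr 1
  ring

noncomputable def flip (i0 : Fin n) (w : Fin n → Bool) : Fin n → Bool :=
  Function.update w i0 (!(w i0))

lemma flip_invol (i0 : Fin n) : Function.Involutive (flip n i0) := by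
  intro w
  funext j
  by_cases hj : j = i0
  · subst hj; simp [flip, Function.update_self]
  · simp [flip, Function.update_of_ne hj]

lemma flip_apply_ne (i0 : Fin n) (w : Fin n → Bool) {j : Fin n} (hj : j ≠ i0) :
    flip n i0 w j = w j := Function.update_of_ne hj _ _

lemma flip_apply_self (i0 : Fin n) (w : Fin n → Bool) :
    spin (flip n i0 w i0) = - spin (w i0) := by
  rw [flip, Function.update_self, spin_not]

lemma Soth_flip (i0 : Fin n) (w : Fin n → Bool) : Soth n i0 (flip n i0 w) = Soth n i0 w := by
  refine Finset.sum_congr rfl fun j _ => ?_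
  by_cases hj : j = i0
  · simp [hj]
  · rw [if_neg hj, if_neg hj, flip_apply_ne n i0 w hj]

lemma pairOth_flip (i0 : Fin n) (w : Fin n → Bool) :
    pairOth n i0 (flip n i0 w) = pairOth n i0 w := by
  refine Finset.sum_congr rfl fun i _ => Finset.sum_congr rfl fun j _ => ?_
  by_cases hc : i < j ∧ i ≠ i0 ∧ j ≠ i0
  · rw [if_pos hc, if_pos hc, flip_apply_ne n i0 w hc.2.1, flip_apply_ne n i0 w hc.2.2]
  · rw [if_neg hc, if_neg hc]

lemma flip_term (c t v s : ℝ) (hs : s = 1 ∨ s = -1) :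
    Real.exp (c + s * t) * ((s - Real.tanh t) * v)
      + Real.exp (c + -s * t) * ((-s - Real.tanh t) * v) = 0 := by
  have hc : Real.cosh t ≠ 0 := (Real.cosh_pos t).ne'
  have he : Real.exp t + Real.exp (-t) ≠ 0 := by positivity
  rcases hs with rfl2 | rfl2 <;> subst rfl2 <;>
    rw [Real.tanh_eq_sinh_div_cosh, Real.sinh_eq, Real.cosh_eq] <;>
    simp only [one_mul, neg_one_mul, neg_neg] <;>
    rw [Real.exp_add, Real.exp_add] <;>
    field_simp <;> ring

lemma weight_sum_zero (i0 : Fin n) (φ : ℝ → ℝ) :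
    ∑ w : Fin n → Bool, cwWeight n β h w
      * ((spin (w i0) - Real.tanh ((β / n) * Soth n i0 w + h)) * φ (Soth n i0 w)) = 0 := by
  set F : (Fin n → Bool) → ℝ := fun w => cwWeight n β h w
    * ((spin (w i0) - Real.tanh ((β / n) * Soth n i0 w + h)) * φ (Soth n i0 w)) with hF
  have hrev : ∑ w : Fin n → Bool, F (flip n i0 w) = ∑ w : Fin n → Bool, F w :=
    Fintype.sum_equiv ((flip_invol n i0).toPerm _) _ _ (fun w => rfl)
  have hpt : ∀ w, F w + F (flip n i0 w) = 0 := by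
    intro w
    rw [hF]
    simp only
    rw [weight_eq n β h i0 w, weight_eq n β h i0 (flip n i0 w)]
    have hCf : Cfun n β h i0 (flip n i0 w) = Cfun n β h i0 w := by
      rw [Cfun, Cfun, pairOth_flip, Soth_flip]
    rw [hCf, Soth_flip, flip_apply_self]
    have : -spin (w i0) * ((β / n) * Soth n i0 w + h)
        = -(spin (w i0)) * ((β / n) * Soth n i0 w + h) := by ring
    rw [this]
    exact flip_term (Cfun n β h i0 w) ((β / n) * Soth n i0 w + h) (φ (Soth n i0 w))
      (spin (w i0)) (spin_cases (w i0))
  have h2 : (2:ℝ) * ∑ w : Fin n → Bool, F w = 0 := by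
    have : ∑ w : Fin n → Bool, (F w + F (flip n i0 w)) = 0 := by
      simp only [hpt]; simp
    rw [Finset.sum_add_distrib, hrev] at this
    linarith
  linarith


lemma Ex_congr (f g : (Fin n → Bool) → ℝ) (hfg : ∀ w, f w = g w) : Ex n β h f = Ex n β h g :=
  Finset.sum_congr rfl fun w _ => by rw [hfg w]

lemma flip_id (i0 : Fin n) (φ : ℝ → ℝ) :
    Ex n β h (fun w => spin (w i0) * φ (Soth n i0 w))
      = Ex n β h (fun w => Real.tanh ((β / n) * Soth n i0 w + h) * φ (Soth n i0 w)) := by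
  have key := weight_sum_zero n β h i0 φ
  have e : Ex n β h (fun w => spin (w i0) * φ (Soth n i0 w))
      - Ex n β h (fun w => Real.tanh ((β / n) * Soth n i0 w + h) * φ (Soth n i0 w))
      = (∑ w : Fin n → Bool, cwWeight n β h w
        * ((spin (w i0) - Real.tanh ((β / n) * Soth n i0 w + h)) * φ (Soth n i0 w)))
        / (∑ w' : Fin n → Bool, cwWeight n β h w') := by
    rw [← Ex_sub, Ex, Finset.sum_div]
    refine Finset.sum_congr rfl fun w _ => ?_
    rw [cwProb]
    ring
  rw [key, zero_div] at e
  linarith [abs_nonneg (0:ℝ)]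

lemma cov_comm (f g : (Fin n → Bool) → ℝ) : Cov n β h f g = Cov n β h g f := by
  unfold Cov
  rw [Ex_congr n β h _ _ (fun w => mul_comm (f w) (g w))]
  ring

lemma cov_add_right (f a b : (Fin n → Bool) → ℝ) :
    Cov n β h f (fun w => a w + b w) = Cov n β h f a + Cov n β h f b := by
  unfold Cov
  rw [Ex_congr n β h (fun w => f w * (a w + b w)) (fun w => f w * a w + f w * b w)
    (fun w => by ring), Ex_add, Ex_add]
  ring

lemma cov_sub_right (f a b : (Fin n → Bool) → ℝ) :
    Cov n β h f (fun w => a w - b w) = Cov n β h f a - Cov n β h f b := by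
  unfold Cov
  rw [Ex_congr n β h (fun w => f w * (a w - b w)) (fun w => f w * a w - f w * b w)
    (fun w => by ring), Ex_sub, Ex_sub]
  ring

lemma cov_congr (f f' g g' : (Fin n → Bool) → ℝ) (h1 : ∀ w, f w = f' w) (h2 : ∀ w, g w = g' w) :
    Cov n β h f g = Cov n β h f' g' := by
  unfold Cov
  rw [Ex_congr n β h f f' h1, Ex_congr n β h g g' h2,
    Ex_congr n β h (fun w => f w * g w) (fun w => f' w * g' w)
      (fun w => by show f w * g w = f' w * g' w; rw [h1 w, h2 w])]

lemma cov_sum_left {ι : Type*} (s : Finset ι) (F : ι → (Fin n → Bool) → ℝ)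
    (G : (Fin n → Bool) → ℝ) :
    Cov n β h (fun w => ∑ i ∈ s, F i w) G = ∑ i ∈ s, Cov n β h (F i) G := by
  unfold Cov
  rw [Ex_congr n β h (fun w => (∑ i ∈ s, F i w) * G w) (fun w => ∑ i ∈ s, F i w * G w)
    (fun w => by show (∑ i ∈ s, F i w) * G w = ∑ i ∈ s, F i w * G w; rw [Finset.sum_mul]),
    Ex_sum, Ex_sum, Finset.sum_sub_distrib, ← Finset.sum_mul]

lemma var_alt (f : (Fin n → Bool) → ℝ) :
    Ex n β h (fun w => (f w - Ex n β h f)^2) = Cov n β h f f := by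
  have e : ∀ w, (f w - Ex n β h f)^2
      = f w * f w - (2 * Ex n β h f) * f w + Ex n β h f * Ex n β h f := fun w => by ring
  rw [Ex_congr n β h _ _ e, Ex_add, Ex_sub, Ex_const_mul, Ex_const]
  unfold Cov
  ring

noncomputable def Xtot (n : ℕ) (w : Fin n → Bool) : ℝ := ∑ i : Fin n, spin (w i)

lemma Soth_eq (i : Fin n) (w : Fin n → Bool) : Soth n i w = Xtot n w - spin (w i) := by
  have := sum_split n i w
  unfold Xtot
  linarith

lemma flip_id1 (i0 : Fin n) :
    Ex n β h (fun w => spin (w i0))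
      = Ex n β h (fun w => Real.tanh ((β / n) * Soth n i0 w + h)) := by
  have e := flip_id n β h i0 (fun _ => (1:ℝ))
  simpa using e

lemma flip_id2 (i0 : Fin n) :
    Ex n β h (fun w => spin (w i0) * Soth n i0 w)
      = Ex n β h (fun w => Real.tanh ((β / n) * Soth n i0 w + h) * Soth n i0 w) := by
  simpa using flip_id n β h i0 (fun x => x)

lemma cov_spin_soth (i : Fin n) :
    Cov n β h (fun w => spin (w i)) (Soth n i)
      = Cov n β h (fun w => Real.tanh ((β / n) * Soth n i w + h)) (Soth n i) := by
  unfold Cov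
  rw [flip_id1 n β h i, flip_id2 n β h i]

lemma cov_spin_bound (hβ0 : 0 ≤ β) (hn : 0 < n) (i : Fin n) :
    Cov n β h (fun w => spin (w i)) (Xtot n)
      ≤ 1 + (β / n) * Cov n β h (Xtot n) (Xtot n) := by
  have hn' : (0:ℝ) < n := by exact_mod_cast hn
  have hq : 0 ≤ β / (n:ℝ) := div_nonneg hβ0 hn'.le
  have hv0 : 0 ≤ Cov n β h (Xtot n) (Xtot n) := var_nonneg n β h _
  set VX := Cov n β h (Xtot n) (Xtot n) with hVX
  set vs := Cov n β h (fun w => spin (w i)) (fun w => spin (w i)) with hvs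
  set c := Cov n β h (fun w => spin (w i)) (Soth n i) with hc
  have hvs0 : 0 ≤ vs := var_nonneg n β h _
  have hvs1 : vs ≤ 1 := by
    rw [hvs]
    unfold Cov
    rw [Ex_congr n β h (fun w => spin (w i) * spin (w i)) (fun _ => (1:ℝ))
      (fun w => spin_sq (w i)), Ex_const]
    nlinarith [sq_nonneg (Ex n β h (fun w => spin (w i))),
      sq_abs (Ex n β h (fun w => spin (w i)))]
  have hdecX : Cov n β h (fun w => spin (w i)) (Xtot n) = vs + c := by
    have e : Cov n β h (fun w => spin (w i)) (Xtot n)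
        = Cov n β h (fun w => spin (w i)) (fun w => spin (w i) + Soth n i w) :=
      cov_congr n β h _ _ _ _ (fun w => rfl) (fun w => by rw [Soth_eq]; ring)
    rw [e, cov_add_right]
  have hXs : Cov n β h (Xtot n) (fun w => spin (w i)) = vs + c := by
    rw [cov_comm n β h (Xtot n) (fun w => spin (w i))]
    exact hdecX
  have hVSo : Cov n β h (Soth n i) (Soth n i) = VX - 2 * (vs + c) + vs := by
    have e : Cov n β h (Soth n i) (Soth n i)
        = Cov n β h (fun w => Xtot n w - spin (w i)) (fun w => Xtot n w - spin (w i)) :=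
      cov_congr n β h _ _ _ _ (fun w => Soth_eq n i w) (fun w => Soth_eq n i w)
    rw [e, cov_sub_right,
      cov_comm n β h (fun w => Xtot n w - spin (w i)) (Xtot n), cov_sub_right,
      cov_comm n β h (fun w => Xtot n w - spin (w i)) (fun w => spin (w i)), cov_sub_right,
      hXs, hdecX, ← hVX, ← hvs]
    ring
  have hkey : c ≤ (β / n) * Cov n β h (Soth n i) (Soth n i) := by
    rw [hc, cov_spin_soth]
    refine cov_le_of_pair n β h ?_
    intro w w'
    have hterm := tanh_cov_term (β / (n:ℝ)) (Soth n i w - Soth n i w')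
      ((β / n) * Soth n i w + h) ((β / n) * Soth n i w' + h) hq (by ring)
    calc (Real.tanh ((β / n) * Soth n i w + h) - Real.tanh ((β / n) * Soth n i w' + h))
          * (Soth n i w - Soth n i w')
        ≤ (β / (n:ℝ)) * (Soth n i w - Soth n i w') ^ 2 := hterm
      _ = (β / (n:ℝ)) * ((Soth n i w - Soth n i w') * (Soth n i w - Soth n i w')) := by ring
  have hkey2 : c ≤ (β / n) * (VX - vs - 2 * c) := by
    rw [hVSo] at hkey
    calc c ≤ (β / n) * (VX - 2 * (vs + c) + vs) := hkey
      _ = (β / n) * (VX - vs - 2 * c) := by ring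
  have hcVX : c ≤ (β / n) * VX := by
    nlinarith [hkey2, hvs0, hv0, hq, mul_nonneg hq hvs0, mul_nonneg hq hv0,
      mul_nonneg (mul_nonneg hq hq) hv0]
  rw [hdecX]
  linarith

lemma var_bound (hβ0 : 0 ≤ β) (hβ1 : β < 1) (hn : 0 < n) :
    Cov n β h (Xtot n) (Xtot n) ≤ n / (1 - β) := by
  have hn' : (0:ℝ) < n := by exact_mod_cast hn
  have h1β : (0:ℝ) < 1 - β := by linarith
  have hsum : Cov n β h (Xtot n) (Xtot n)
      = ∑ i : Fin n, Cov n β h (fun w => spin (w i)) (Xtot n) := by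
    have e : Cov n β h (Xtot n) (Xtot n)
        = Cov n β h (fun w => ∑ i : Fin n, spin (w i)) (Xtot n) := rfl
    rw [e, cov_sum_left]
  have hle : Cov n β h (Xtot n) (Xtot n)
      ≤ (n:ℝ) + β * Cov n β h (Xtot n) (Xtot n) := by
    calc Cov n β h (Xtot n) (Xtot n)
        = ∑ i : Fin n, Cov n β h (fun w => spin (w i)) (Xtot n) := hsum
      _ ≤ ∑ _i : Fin n, (1 + (β / n) * Cov n β h (Xtot n) (Xtot n)) :=
          Finset.sum_le_sum fun i _ => cov_spin_bound n β h hβ0 hn i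
      _ = (n:ℝ) * (1 + (β / n) * Cov n β h (Xtot n) (Xtot n)) := by
          rw [Finset.sum_const, Finset.card_univ, Fintype.card_fin, nsmul_eq_mul]
      _ = (n:ℝ) + β * Cov n β h (Xtot n) (Xtot n) := by field_simp
  rw [le_div_iff₀ h1β]
  nlinarith [hle]

lemma spin_mean_close (hβ0 : 0 ≤ β) (hβ1 : β < 1) (hn : 0 < n) (i : Fin n) :
    |Ex n β h (fun w => spin (w i))
        - Real.tanh (β * (Ex n β h (Xtot n) / n) + h)|
      ≤ (β + 2 * β ^ 2 / (1 - β)) / n := by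
  have hn' : (0:ℝ) < n := by exact_mod_cast hn
  have h1β : (0:ℝ) < 1 - β := by linarith
  have hq : 0 ≤ β / (n:ℝ) := div_nonneg hβ0 hn'.le
  -- step 1: from the conditional identity plus Lipschitz
  have s1 : |Ex n β h (fun w => spin (w i))
      - Ex n β h (fun w => Real.tanh (β * (Xtot n w / n) + h))| ≤ β / n := by
    rw [flip_id1 n β h i]
    have esub := Ex_sub n β h (fun w => Real.tanh ((β / n) * Soth n i w + h))
      (fun w => Real.tanh (β * (Xtot n w / n) + h))
    rw [← esub]
    refine (abs_Ex_le n β h _).trans ?_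
    have hpt : ∀ w, |Real.tanh ((β / n) * Soth n i w + h)
        - Real.tanh (β * (Xtot n w / n) + h)| ≤ β / n := by
      intro w
      refine (tanh_lip _ _).trans (le_of_eq ?_)
      calc |(β / n) * Soth n i w + h - (β * (Xtot n w / n) + h)|
          = |(-(β / (n:ℝ))) * spin (w i)| := by rw [Soth_eq]; congr 1; ring
        _ = β / n := by
            rw [abs_mul, abs_spin, mul_one, abs_neg, abs_of_nonneg hq]
    refine (Ex_mono n β h hpt).trans (le_of_eq ?_)
    exact Ex_const n β h _
  -- centered first moment
  have hMn : Ex n β h (fun w => Xtot n w / n) = Ex n β h (Xtot n) / n := by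
    have e := Ex_const_mul n β h (1 / (n:ℝ)) (Xtot n)
    have e2 : Ex n β h (fun w => Xtot n w / n)
        = Ex n β h (fun w => (1 / (n:ℝ)) * Xtot n w) :=
      Ex_congr n β h _ _ (fun w => by ring)
    rw [e2, e]
    ring
  have hcent : Ex n β h (fun w => Xtot n w / n - Ex n β h (Xtot n) / n) = 0 := by
    have e := Ex_sub n β h (fun w => Xtot n w / n) (fun _ => Ex n β h (Xtot n) / n)
    rw [e, hMn, Ex_const]
    ring
  -- step 2: Taylor with second-order bound
  have s2 : |Ex n β h (fun w => Real.tanh (β * (Xtot n w / n) + h))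
      - Real.tanh (β * (Ex n β h (Xtot n) / n) + h)|
      ≤ 2 * β ^ 2 * Cov n β h (Xtot n) (Xtot n) / (n:ℝ) ^ 2 := by
    have hrep : Ex n β h (fun w => Real.tanh (β * (Xtot n w / n) + h))
        - Real.tanh (β * (Ex n β h (Xtot n) / n) + h)
        = Ex n β h (fun w => Real.tanh (β * (Xtot n w / n) + h)
            - Real.tanh (β * (Ex n β h (Xtot n) / n) + h)
            - (β / Real.cosh (β * (Ex n β h (Xtot n) / n) + h) ^ 2)
              * (Xtot n w / n - Ex n β h (Xtot n) / n)) := by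
      have e1 := Ex_sub n β h
        (fun w => Real.tanh (β * (Xtot n w / n) + h)
          - Real.tanh (β * (Ex n β h (Xtot n) / n) + h))
        (fun w => (β / Real.cosh (β * (Ex n β h (Xtot n) / n) + h) ^ 2)
          * (Xtot n w / n - Ex n β h (Xtot n) / n))
      have e2 := Ex_sub n β h (fun w => Real.tanh (β * (Xtot n w / n) + h))
        (fun _ => Real.tanh (β * (Ex n β h (Xtot n) / n) + h))
      have e3 := Ex_const_mul n β h
        (β / Real.cosh (β * (Ex n β h (Xtot n) / n) + h) ^ 2)
        (fun w => Xtot n w / n - Ex n β h (Xtot n) / n)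
      rw [e1, e2, e3, hcent, Ex_const]
      ring
    rw [hrep]
    refine (abs_Ex_le n β h _).trans ?_
    have hpt : ∀ w, |Real.tanh (β * (Xtot n w / n) + h)
        - Real.tanh (β * (Ex n β h (Xtot n) / n) + h)
        - (β / Real.cosh (β * (Ex n β h (Xtot n) / n) + h) ^ 2)
          * (Xtot n w / n - Ex n β h (Xtot n) / n)|
        ≤ (2 * β ^ 2 / (n:ℝ) ^ 2) * (Xtot n w - Ex n β h (Xtot n)) ^ 2 := by
      intro w
      refine (g_taylor β h (Xtot n w / n) (Ex n β h (Xtot n) / n)).trans (le_of_eq ?_)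
      field_simp
    refine (Ex_mono n β h hpt).trans ?_
    have e4 := Ex_const_mul n β h (2 * β ^ 2 / (n:ℝ) ^ 2)
      (fun w => (Xtot n w - Ex n β h (Xtot n)) ^ 2)
    rw [e4, var_alt]
    exact le_of_eq (by ring)
  -- combine
  have hVX := var_bound n β h hβ0 hβ1 hn
  have hv0 : 0 ≤ Cov n β h (Xtot n) (Xtot n) := var_nonneg n β h _
  have s2' : |Ex n β h (fun w => Real.tanh (β * (Xtot n w / n) + h))
      - Real.tanh (β * (Ex n β h (Xtot n) / n) + h)|
      ≤ 2 * β ^ 2 / ((1 - β) * n) := by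
    refine s2.trans ?_
    have step : 2 * β ^ 2 * Cov n β h (Xtot n) (Xtot n) / (n:ℝ) ^ 2
        ≤ 2 * β ^ 2 * ((n:ℝ) / (1 - β)) / (n:ℝ) ^ 2 := by gcongr
    refine step.trans (le_of_eq ?_)
    field_simp
  calc |Ex n β h (fun w => spin (w i)) - Real.tanh (β * (Ex n β h (Xtot n) / n) + h)|
      ≤ |Ex n β h (fun w => spin (w i))
          - Ex n β h (fun w => Real.tanh (β * (Xtot n w / n) + h))|
        + |Ex n β h (fun w => Real.tanh (β * (Xtot n w / n) + h))
          - Real.tanh (β * (Ex n β h (Xtot n) / n) + h)| := by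
        exact abs_sub_le _ _ _
    _ ≤ β / n + 2 * β ^ 2 / ((1 - β) * n) := add_le_add s1 s2'
    _ = (β + 2 * β ^ 2 / (1 - β)) / n := by field_simp

end CWaux

open CWaux in
/-- In the high-temperature regime with nonzero external field, the mean of a single spin
is within `C/n` of the fixed point `π` of `x = tanh(βx + h)`. -/
theorem stmt1 (β h : ℝ) (hβ0 : 0 ≤ β) (hβ1 : β < 1) (hh : h ≠ 0)
    (pfix : ℝ) (hpfix : pfix = Real.tanh (β * pfix + h)) :
    ∃ C > 0, ∀ (n : ℕ) (hn : 0 < n),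
      |(∑ w : Fin n → Bool, cwProb n β h w * spin (w ⟨0, hn⟩)) - pfix| ≤ C / n := by
  have h1β : (0:ℝ) < 1 - β := by linarith
  have hD0 : 0 ≤ β + 2 * β ^ 2 / (1 - β) :=
    add_nonneg hβ0 (div_nonneg (by positivity) h1β.le)
  refine ⟨(β + 2 * β ^ 2 / (1 - β)) / (1 - β) + 1, ?_, ?_⟩
  · have := div_nonneg hD0 h1β.le
    linarith
  intro n hn
  have hn' : (0:ℝ) < n := by exact_mod_cast hn
  have hb : ∀ i : Fin n,
      |Ex n β h (fun w => spin (w i))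
        - Real.tanh (β * (Ex n β h (Xtot n) / n) + h)|
      ≤ (β + 2 * β ^ 2 / (1 - β)) / n :=
    fun i => spin_mean_close n β h hβ0 hβ1 hn i
  -- |μ - T| ≤ D/n
  have hMsum : Ex n β h (Xtot n)
      = ∑ i : Fin n, Ex n β h (fun w => spin (w i)) :=
    Ex_sum n β h Finset.univ (fun i w => spin (w i))
  have hμT : |Ex n β h (Xtot n) / n - Real.tanh (β * (Ex n β h (Xtot n) / n) + h)|
      ≤ (β + 2 * β ^ 2 / (1 - β)) / n := by
    have habs : |Ex n β h (Xtot n)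
        - (n:ℝ) * Real.tanh (β * (Ex n β h (Xtot n) / n) + h)|
        ≤ (n:ℝ) * ((β + 2 * β ^ 2 / (1 - β)) / n) := by
      calc |Ex n β h (Xtot n) - (n:ℝ) * Real.tanh (β * (Ex n β h (Xtot n) / n) + h)|
          = |∑ i : Fin n, (Ex n β h (fun w => spin (w i))
              - Real.tanh (β * (Ex n β h (Xtot n) / n) + h))| := by
            rw [Finset.sum_sub_distrib, Finset.sum_const, Finset.card_univ, Fintype.card_fin,
              nsmul_eq_mul, ← hMsum]
        _ ≤ ∑ i : Fin n, |Ex n β h (fun w => spin (w i))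
              - Real.tanh (β * (Ex n β h (Xtot n) / n) + h)| :=
            Finset.abs_sum_le_sum_abs _ _
        _ ≤ ∑ _i : Fin n, ((β + 2 * β ^ 2 / (1 - β)) / n) :=
            Finset.sum_le_sum fun i _ => hb i
        _ = (n:ℝ) * ((β + 2 * β ^ 2 / (1 - β)) / n) := by
            rw [Finset.sum_const, Finset.card_univ, Fintype.card_fin, nsmul_eq_mul]
    have hrewr : Ex n β h (Xtot n) / n - Real.tanh (β * (Ex n β h (Xtot n) / n) + h)
        = (Ex n β h (Xtot n) - (n:ℝ) * Real.tanh (β * (Ex n β h (Xtot n) / n) + h)) / n := by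
      field_simp
    rw [hrewr, abs_div, abs_of_pos hn', div_le_div_iff₀ hn' hn']
    calc |Ex n β h (Xtot n) - (n:ℝ) * Real.tanh (β * (Ex n β h (Xtot n) / n) + h)| * n
        ≤ ((n:ℝ) * ((β + 2 * β ^ 2 / (1 - β)) / n)) * n := by
          exact mul_le_mul_of_nonneg_right habs hn'.le
      _ = (β + 2 * β ^ 2 / (1 - β)) * n := by field_simp
  -- Lipschitz comparison with the fixed point
  have htt : |Real.tanh (β * (Ex n β h (Xtot n) / n) + h) - pfix|
      ≤ β * |Ex n β h (Xtot n) / n - pfix| := by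
    conv_lhs => rw [hpfix]
    refine (tanh_lip _ _).trans (le_of_eq ?_)
    rw [show β * (Ex n β h (Xtot n) / n) + h - (β * pfix + h)
        = β * (Ex n β h (Xtot n) / n - pfix) by ring, abs_mul, abs_of_nonneg hβ0]
  have hfix : |Ex n β h (Xtot n) / n - pfix|
      ≤ (β + 2 * β ^ 2 / (1 - β)) / ((1 - β) * n) := by
    have tri : |Ex n β h (Xtot n) / n - pfix|
        ≤ |Ex n β h (Xtot n) / n - Real.tanh (β * (Ex n β h (Xtot n) / n) + h)|
          + |Real.tanh (β * (Ex n β h (Xtot n) / n) + h) - pfix| := abs_sub_le _ _ _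
    have hlin : (1 - β) * |Ex n β h (Xtot n) / n - pfix|
        ≤ (β + 2 * β ^ 2 / (1 - β)) / n := by nlinarith [hμT, htt, tri]
    rw [le_div_iff₀ (by positivity : (0:ℝ) < (1 - β) * n)]
    calc |Ex n β h (Xtot n) / n - pfix| * ((1 - β) * n)
        = ((1 - β) * |Ex n β h (Xtot n) / n - pfix|) * n := by ring
      _ ≤ ((β + 2 * β ^ 2 / (1 - β)) / n) * n := mul_le_mul_of_nonneg_right hlin hn'.le
      _ = β + 2 * β ^ 2 / (1 - β) := by field_simp
  -- final assembly
  have hfin : |Ex n β h (fun w => spin (w ⟨0, hn⟩)) - pfix|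
      ≤ (β + 2 * β ^ 2 / (1 - β)) / n
        + β * ((β + 2 * β ^ 2 / (1 - β)) / ((1 - β) * n)) := by
    calc |Ex n β h (fun w => spin (w ⟨0, hn⟩)) - pfix|
        ≤ |Ex n β h (fun w => spin (w ⟨0, hn⟩))
            - Real.tanh (β * (Ex n β h (Xtot n) / n) + h)|
          + |Real.tanh (β * (Ex n β h (Xtot n) / n) + h) - pfix| := abs_sub_le _ _ _
      _ ≤ (β + 2 * β ^ 2 / (1 - β)) / n + β * |Ex n β h (Xtot n) / n - pfix| :=
          add_le_add (hb _) htt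
      _ ≤ (β + 2 * β ^ 2 / (1 - β)) / n
          + β * ((β + 2 * β ^ 2 / (1 - β)) / ((1 - β) * n)) := by
          have := mul_le_mul_of_nonneg_left hfix hβ0
          linarith
  have hgoal : (∑ w : Fin n → Bool, cwProb n β h w * spin (w ⟨0, hn⟩))
      = Ex n β h (fun w => spin (w ⟨0, hn⟩)) := rfl
  rw [hgoal]
  refine hfin.trans ?_
  have e1 : (β + 2 * β ^ 2 / (1 - β)) / n
      + β * ((β + 2 * β ^ 2 / (1 - β)) / ((1 - β) * n))
      = ((β + 2 * β ^ 2 / (1 - β)) / (1 - β)) / n := by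
    field_simp
    ring
  rw [e1]
  gcongr
  linarith
end

section
/- For β ∈ [0,1] define F_β(v) = −v²/2 + log cosh(√β·v). Then for every n ≥ 1, every t > 0, and every 0 ≤ β₁ < β₂ ≤ 1, the normalized tail masses satisfy ( ∫_t^∞ exp(n·F_{β₁}(v)) dv ) / ( ∫_0^∞ exp(n·F_{β₁}(v)) dv ) ≤ ( ∫_t^∞ exp(n·F_{β₂}(v)) dv ) / ( ∫_0^∞ exp(n·F_{β₂}(v)) dv ). Equivalently, if W_n^{(β)} denotes a random variable with density on ℝ proportional to exp(n·F_β(|v|)) (symmetric), then P(|W_n^{(β)}| ≥ t) is nondecreasing in β ∈ [0,1] for every fixed n and t > 0. -/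
open MeasureTheory Real

/-- `F_β(v) = −v²/2 + log cosh(√β·v)`. -/
noncomputable def Fcw (β v : ℝ) : ℝ := -v ^ 2 / 2 + Real.log (Real.cosh (Real.sqrt β * v))

lemma cosh_mul_cosh_mono {a₁ a₂ v w : ℝ} (ha : 0 ≤ a₁) (ha2 : a₁ ≤ a₂)
    (hv : 0 ≤ v) (hvw : v ≤ w) :
    Real.cosh (a₁ * w) * Real.cosh (a₂ * v) ≤ Real.cosh (a₁ * v) * Real.cosh (a₂ * w) := by
  have hw : 0 ≤ w := hv.trans hvw
  have h1 : Real.cosh (a₁ * w + a₂ * v) ≤ Real.cosh (a₁ * v + a₂ * w) := by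
    rw [Real.cosh_le_cosh]
    have q1 := mul_nonneg ha hw
    have q2 := mul_nonneg (ha.trans ha2) hv
    have q3 := mul_nonneg ha hv
    have q4 := mul_nonneg (ha.trans ha2) hw
    rw [abs_of_nonneg (by linarith), abs_of_nonneg (by linarith)]
    nlinarith
  have h2 : Real.cosh (a₁ * w - a₂ * v) ≤ Real.cosh (a₂ * w - a₁ * v) := by
    rw [Real.cosh_le_cosh]
    rw [abs_of_nonneg (by nlinarith : (0:ℝ) ≤ a₂ * w - a₁ * v)]
    rw [abs_le]
    constructor <;> nlinarith
  have e1 := Real.cosh_add (a₁ * w) (a₂ * v)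
  have e2 := Real.cosh_sub (a₁ * w) (a₂ * v)
  have e3 := Real.cosh_add (a₁ * v) (a₂ * w)
  have e4 := Real.cosh_sub (a₂ * w) (a₁ * v)
  nlinarith [h1, h2, e1, e2, e3, e4]

lemma exp_nFcw_eq (n : ℕ) (β v : ℝ) :
    Real.exp (n * Fcw β v)
      = Real.exp (n * (-v ^ 2 / 2)) * Real.cosh (Real.sqrt β * v) ^ n := by
  rw [Fcw, mul_add, Real.exp_add]
  congr 1
  rw [Real.exp_nat_mul, Real.exp_log (Real.cosh_pos _)]

/-- Pointwise log-supermodularity / monotone likelihood ratio. -/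
lemma exp_nFcw_mlr (n : ℕ) {β₁ β₂ v w : ℝ} (h1 : 0 ≤ β₁) (h12 : β₁ ≤ β₂)
    (hv : 0 ≤ v) (hvw : v ≤ w) :
    Real.exp (n * Fcw β₁ w) * Real.exp (n * Fcw β₂ v)
      ≤ Real.exp (n * Fcw β₁ v) * Real.exp (n * Fcw β₂ w) := by
  have ha : 0 ≤ Real.sqrt β₁ := Real.sqrt_nonneg _
  have ha2 : Real.sqrt β₁ ≤ Real.sqrt β₂ := Real.sqrt_le_sqrt h12
  have key := cosh_mul_cosh_mono ha ha2 hv hvw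
  have hkeyn : (Real.cosh (Real.sqrt β₁ * w) * Real.cosh (Real.sqrt β₂ * v)) ^ n
      ≤ (Real.cosh (Real.sqrt β₁ * v) * Real.cosh (Real.sqrt β₂ * w)) ^ n := by
    apply pow_le_pow_left₀ (by positivity) key
  rw [exp_nFcw_eq, exp_nFcw_eq, exp_nFcw_eq, exp_nFcw_eq]
  rw [mul_pow] at hkeyn
  rw [mul_pow] at hkeyn
  have hE : 0 ≤ Real.exp (n * (-w ^ 2 / 2)) * Real.exp (n * (-v ^ 2 / 2)) := by positivity
  calc Real.exp (↑n * (-w ^ 2 / 2)) * Real.cosh (Real.sqrt β₁ * w) ^ n *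
        (Real.exp (↑n * (-v ^ 2 / 2)) * Real.cosh (Real.sqrt β₂ * v) ^ n)
      = Real.exp (↑n * (-w ^ 2 / 2)) * Real.exp (↑n * (-v ^ 2 / 2)) *
        (Real.cosh (Real.sqrt β₁ * w) ^ n * Real.cosh (Real.sqrt β₂ * v) ^ n) := by ring
    _ ≤ Real.exp (↑n * (-w ^ 2 / 2)) * Real.exp (↑n * (-v ^ 2 / 2)) *
        (Real.cosh (Real.sqrt β₁ * v) ^ n * Real.cosh (Real.sqrt β₂ * w) ^ n) := by
        exact mul_le_mul_of_nonneg_left hkeyn hE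
    _ = Real.exp (↑n * (-v ^ 2 / 2)) * Real.cosh (Real.sqrt β₁ * v) ^ n *
        (Real.exp (↑n * (-w ^ 2 / 2)) * Real.cosh (Real.sqrt β₂ * w) ^ n) := by ring

lemma continuous_exp_nFcw (n : ℕ) (β : ℝ) :
    Continuous (fun v => Real.exp (n * Fcw β v)) := by
  apply Real.continuous_exp.comp
  apply continuous_const.mul
  unfold Fcw
  apply Continuous.add
  · exact ((continuous_pow 2).neg).div_const 2
  · exact (Real.continuous_cosh.comp (continuous_const.mul continuous_id)).log
      (fun x => (Real.cosh_pos _).ne')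

lemma cosh_le_exp_abs (x : ℝ) : Real.cosh x ≤ Real.exp |x| := by
  rw [Real.cosh_eq]
  have h1 : Real.exp x ≤ Real.exp |x| := Real.exp_le_exp.2 (le_abs_self x)
  have h2 : Real.exp (-x) ≤ Real.exp |x| := Real.exp_le_exp.2 (neg_le_abs x)
  linarith

lemma integrableOn_exp_nFcw {n : ℕ} (hn : 1 ≤ n) {β : ℝ} (h1 : 0 ≤ β) (h2 : β ≤ 1) :
    IntegrableOn (fun v => Real.exp (n * Fcw β v)) (Set.Ioi (0 : ℝ)) := by
  have hnpos : (0:ℝ) < (n : ℝ) / 2 := by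
    have : (1:ℝ) ≤ (n : ℝ) := by exact_mod_cast hn
    linarith
  have hg : Integrable (fun v : ℝ => Real.exp ((n:ℝ)/2) *
      Real.exp (-((n:ℝ)/2) * (v - 1) ^ 2)) := by
    exact ((integrable_exp_neg_mul_sq hnpos).comp_sub_right 1).const_mul _
  refine (hg.integrableOn).mono' ((continuous_exp_nFcw n β).aestronglyMeasurable.restrict) ?_
  filter_upwards [ae_restrict_mem measurableSet_Ioi] with v hv
  have hv0 : (0:ℝ) < v := hv
  have hsb : Real.sqrt β ≤ 1 := by
    rw [show (1:ℝ) = Real.sqrt 1 by simp]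
    exact Real.sqrt_le_sqrt h2
  have hlc : Real.log (Real.cosh (Real.sqrt β * v)) ≤ v := by
    have := cosh_le_exp_abs (Real.sqrt β * v)
    have habs : |Real.sqrt β * v| ≤ v := by
      rw [abs_of_nonneg (by positivity)]
      nlinarith [Real.sqrt_nonneg β]
    calc Real.log (Real.cosh (Real.sqrt β * v)) ≤ |Real.sqrt β * v| :=
          (Real.log_le_iff_le_exp (Real.cosh_pos _)).2 this
      _ ≤ v := habs
  have hF : (n:ℝ) * Fcw β v ≤ (n:ℝ)/2 + (-((n:ℝ)/2) * (v - 1) ^ 2) := by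
    rw [Fcw]
    have hn0 : (0:ℝ) ≤ (n:ℝ) := by positivity
    nlinarith
  rw [Real.norm_eq_abs, abs_of_pos (Real.exp_pos _), ← Real.exp_add]
  exact Real.exp_le_exp.2 hF

/-- The normalized tail mass of the density proportional to `exp(n F_β)` on `(0,∞)`
is nondecreasing in the inverse temperature `β ∈ [0,1]`. -/
theorem stmt8 (n : ℕ) (hn : 1 ≤ n) (t : ℝ) (ht : 0 < t)
    (β₁ β₂ : ℝ) (h1 : 0 ≤ β₁) (h12 : β₁ < β₂) (h2 : β₂ ≤ 1) :
    (∫ v in Set.Ioi t, Real.exp (n * Fcw β₁ v)) /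
        (∫ v in Set.Ioi (0 : ℝ), Real.exp (n * Fcw β₁ v)) ≤
      (∫ v in Set.Ioi t, Real.exp (n * Fcw β₂ v)) /
        (∫ v in Set.Ioi (0 : ℝ), Real.exp (n * Fcw β₂ v)) := by
  set f₁ : ℝ → ℝ := fun v => Real.exp (n * Fcw β₁ v) with hf₁
  set f₂ : ℝ → ℝ := fun v => Real.exp (n * Fcw β₂ v) with hf₂
  have h2' : β₁ ≤ 1 := le_of_lt (lt_of_lt_of_le h12 h2)
  have hI₁ : IntegrableOn f₁ (Set.Ioi 0) := integrableOn_exp_nFcw hn h1 h2'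
  have hI₂ : IntegrableOn f₂ (Set.Ioi 0) := integrableOn_exp_nFcw hn (h1.trans h12.le) h2
  have hsub_t : Set.Ioi t ⊆ Set.Ioi (0:ℝ) := fun x hx => lt_trans ht hx
  have hsub_c : Set.Ioc (0:ℝ) t ⊆ Set.Ioi (0:ℝ) := fun x hx => hx.1
  have hA₁ : IntegrableOn f₁ (Set.Ioi t) := hI₁.mono_set hsub_t
  have hA₂ : IntegrableOn f₂ (Set.Ioi t) := hI₂.mono_set hsub_t
  have hB₁ : IntegrableOn f₁ (Set.Ioc 0 t) := hI₁.mono_set hsub_c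
  have hB₂ : IntegrableOn f₂ (Set.Ioc 0 t) := hI₂.mono_set hsub_c
  have hApos : ∀ (f : ℝ → ℝ), IntegrableOn f (Set.Ioi t) → (∀ v, 0 < f v) →
      0 < ∫ v in Set.Ioi t, f v := by
    intro f hf hfp
    rw [setIntegral_pos_iff_support_of_nonneg_ae (ae_of_all _ fun v => (hfp v).le) hf]
    have : Function.support f ∩ Set.Ioi t = Set.Ioi t := by
      ext x; simp [Function.support, (hfp x).ne']
    rw [this, Real.volume_Ioi]
    exact ENNReal.zero_lt_top
  have hA₁pos : 0 < ∫ v in Set.Ioi t, f₁ v := hApos f₁ hA₁ fun v => Real.exp_pos _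
  have hA₂pos : 0 < ∫ v in Set.Ioi t, f₂ v := hApos f₂ hA₂ fun v => Real.exp_pos _
  have hB₁nn : 0 ≤ ∫ v in Set.Ioc 0 t, f₁ v :=
    setIntegral_nonneg measurableSet_Ioc fun v _ => (Real.exp_pos _).le
  have hB₂nn : 0 ≤ ∫ v in Set.Ioc 0 t, f₂ v :=
    setIntegral_nonneg measurableSet_Ioc fun v _ => (Real.exp_pos _).le
  have hsplit : ∀ (f : ℝ → ℝ), IntegrableOn f (Set.Ioc 0 t) → IntegrableOn f (Set.Ioi t) →
      (∫ v in Set.Ioi (0:ℝ), f v) = (∫ v in Set.Ioc 0 t, f v) + ∫ v in Set.Ioi t, f v := by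
    intro f hB hA
    rw [← setIntegral_union (Set.Ioc_disjoint_Ioi le_rfl) measurableSet_Ioi hB hA,
      Set.Ioc_union_Ioi_eq_Ioi ht.le]
  have key : (∫ v in Set.Ioi t, f₁ v) * (∫ v in Set.Ioc 0 t, f₂ v)
      ≤ (∫ v in Set.Ioi t, f₂ v) * (∫ v in Set.Ioc 0 t, f₁ v) := by
    have step1 : ∀ w ∈ Set.Ioi t, f₁ w * (∫ v in Set.Ioc 0 t, f₂ v)
        ≤ f₂ w * ∫ v in Set.Ioc 0 t, f₁ v := by
      intro w hw
      rw [← integral_const_mul, ← integral_const_mul]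
      apply setIntegral_mono_on (hB₂.const_mul _) (hB₁.const_mul _) measurableSet_Ioc
      intro v hv
      have := exp_nFcw_mlr n h1 h12.le hv.1.le (hv.2.trans (le_of_lt hw))
      simp only [hf₁, hf₂]
      nlinarith [this]
    calc (∫ v in Set.Ioi t, f₁ v) * (∫ v in Set.Ioc 0 t, f₂ v)
        = ∫ w in Set.Ioi t, f₁ w * (∫ v in Set.Ioc 0 t, f₂ v) := (integral_mul_const _ _).symm
      _ ≤ ∫ w in Set.Ioi t, f₂ w * (∫ v in Set.Ioc 0 t, f₁ v) := by
          exact setIntegral_mono_on (hA₁.mul_const _) (hA₂.mul_const _) measurableSet_Ioi step1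
      _ = (∫ v in Set.Ioi t, f₂ v) * (∫ v in Set.Ioc 0 t, f₁ v) := integral_mul_const _ _
  have hs₁ := hsplit f₁ hB₁ hA₁
  have hs₂ := hsplit f₂ hB₂ hA₂
  rw [hs₁, hs₂, div_le_div_iff₀ (by linarith) (by linarith)]
  nlinarith [key, hA₁pos, hA₂pos]
end

section
/- For every β > 1 the inequality √(β−1) < √β · tanh( √(β(β−1)) ) holds. Consequently, every v > 0 satisfying v = √β·tanh(√β·v) satisfies v² > β − 1; moreover for any such v one has sech²(√β·v) = 1 − v²/β, and hence 1 − β·sech²(√β·v) = 1 − β + v² > 0. -/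
open Real

/-- Key inequality: for `x > 0`, `x < √(1+x²)·tanh x`. -/
lemma key_tanh_lb (x : ℝ) (hx : 0 < x) : x < Real.sqrt (1 + x ^ 2) * Real.tanh x := by
  have hs : x < Real.sinh x := Real.self_lt_sinh_iff.mpr hx
  have hc : 0 < Real.cosh x := Real.cosh_pos x
  have hsq : Real.sqrt (1 + x ^ 2) ^ 2 = 1 + x ^ 2 := Real.sq_sqrt (by positivity)
  have hcs : Real.cosh x ^ 2 = Real.sinh x ^ 2 + 1 := Real.cosh_sq x
  rw [Real.tanh_eq_sinh_div_cosh, ← mul_div_assoc, lt_div_iff₀ hc]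
  have hrnn : 0 ≤ Real.sqrt (1 + x ^ 2) * Real.sinh x := by positivity
  refine lt_of_pow_lt_pow_left₀ 2 hrnn ?_
  rw [mul_pow, mul_pow, hsq, hcs]
  nlinarith [hs, hx]

/-- For `β > 1`: `√(β−1) < √β·tanh(√(β(β−1)))`; consequently every positive fixed point
`v = √β tanh(√β v)` satisfies `v² > β − 1`, `sech²(√β v) = 1 − v²/β`, and
`1 − β·sech²(√β v) = 1 − β + v² > 0`. -/
theorem stmt11 (β : ℝ) (hβ : 1 < β) :
    Real.sqrt (β - 1) < Real.sqrt β * Real.tanh (Real.sqrt (β * (β - 1))) ∧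
    ∀ v : ℝ, 0 < v → v = Real.sqrt β * Real.tanh (Real.sqrt β * v) →
      β - 1 < v ^ 2 ∧
      1 / (Real.cosh (Real.sqrt β * v)) ^ 2 = 1 - v ^ 2 / β ∧
      1 - β * (1 / (Real.cosh (Real.sqrt β * v)) ^ 2) = 1 - β + v ^ 2 ∧
      0 < 1 - β + v ^ 2 := by
  have hβ0 : (0:ℝ) < β := by linarith
  have hsb : 0 < Real.sqrt β := Real.sqrt_pos.mpr hβ0
  have hsb2 : Real.sqrt β ^ 2 = β := Real.sq_sqrt hβ0.le
  constructor
  · set x := Real.sqrt (β * (β - 1)) with hxdef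
    have hx : 0 < x := Real.sqrt_pos.mpr (by nlinarith)
    have hx2 : x ^ 2 = β * (β - 1) := Real.sq_sqrt (by nlinarith)
    have hkey := key_tanh_lb x hx
    have htanh : 0 < Real.tanh x := by
      rw [Real.tanh_eq_sinh_div_cosh]
      exact div_pos (Real.sinh_pos_iff.mpr hx) (Real.cosh_pos x)
    have h1 : Real.sqrt β * x = β * Real.sqrt (β - 1) := by
      rw [hxdef, ← Real.sqrt_mul hβ0.le]
      have : β * (β * (β - 1)) = β ^ 2 * (β - 1) := by ring
      rw [this, Real.sqrt_mul (sq_nonneg β), Real.sqrt_sq hβ0.le]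
    have h2 : Real.sqrt (1 + x ^ 2) < β := by
      apply (Real.sqrt_lt' hβ0).mpr
      rw [hx2]; nlinarith
    have h3 : 0 ≤ Real.sqrt (1 + x ^ 2) := Real.sqrt_nonneg _
    -- multiply hkey by √β and use h2
    nlinarith [mul_lt_mul_of_pos_left hkey hsb,
      mul_lt_mul_of_pos_right (mul_lt_mul_of_pos_left h2 hsb) htanh]
  · intro v hv hfix
    set t := Real.sqrt β * v with htdef
    have ht : 0 < t := by positivity
    have ht2 : t ^ 2 = β * v ^ 2 := by rw [htdef, mul_pow, hsb2]
    have hc : 0 < Real.cosh t := Real.cosh_pos t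
    have hkey := key_tanh_lb t ht
    -- tanh t = v / √β
    have htan : Real.tanh t = v / Real.sqrt β := by
      field_simp at hfix ⊢
      linarith [hfix]
    -- v² > β - 1
    have hvsq : β - 1 < v ^ 2 := by
      rw [htan] at hkey
      have h4 : β < Real.sqrt (1 + t ^ 2) := by
        have := mul_lt_mul_of_pos_left hkey hsb
        have hv' : Real.sqrt β * (Real.sqrt (1 + t ^ 2) * (v / Real.sqrt β))
            = Real.sqrt (1 + t ^ 2) * v := by
          field_simp
        rw [hv'] at this
        -- √β * t = β * v
        have h5 : Real.sqrt β * t = β * v := by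
          rw [htdef, ← mul_assoc, ← sq, hsb2]
        rw [h5] at this
        nlinarith [this, hv]
      have h6 : β ^ 2 < 1 + t ^ 2 := by
        nlinarith [Real.sq_sqrt (show (0:ℝ) ≤ 1 + t ^ 2 by positivity), h4, hβ0]
      rw [ht2] at h6
      nlinarith
    have hveq : v * Real.cosh t = Real.sqrt β * Real.sinh t := by
      rw [Real.tanh_eq_sinh_div_cosh] at hfix
      field_simp at hfix
      linarith
    have hcsh : Real.cosh t ^ 2 - Real.sinh t ^ 2 = 1 := Real.cosh_sq_sub_sinh_sq t
    have hveq2 : v ^ 2 * Real.cosh t ^ 2 = β * Real.sinh t ^ 2 := by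
      have := congrArg (· ^ 2) hveq
      simp only [mul_pow] at this
      rw [hsb2] at this
      exact this
    have hsech : 1 / (Real.cosh t) ^ 2 = 1 - v ^ 2 / β := by
      field_simp
      nlinarith [hcsh, hveq2]
    refine ⟨hvsq, hsech, ?_, by linarith⟩
    rw [hsech]
    field_simp
    ring
end

section
/- For every β > 1 there exists exactly one v_+(β) > 0 such that v_+(β) = √β · tanh( √β · v_+(β) ), and the map β ↦ v_+(β) satisfies lim_{β → 1^+} v_+(β) / √(β − 1) = √3. -/
open Real Filter Set

namespace Stmt12Aux

lemma hasDerivAt_tanh (x : ℝ) : HasDerivAt Real.tanh (1 - Real.tanh x ^ 2) x := by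
  have h := (Real.hasDerivAt_sinh x).div (Real.hasDerivAt_cosh x) (ne_of_gt (Real.cosh_pos x))
  have hfun : (Real.sinh / Real.cosh) = Real.tanh := by
    funext y; rw [Pi.div_apply, Real.tanh_eq_sinh_div_cosh]
  rw [hfun] at h
  refine h.congr_deriv ?_
  rw [Real.tanh_eq_sinh_div_cosh]
  have hc := (Real.cosh_pos x).ne'
  field_simp

lemma continuous_tanh : Continuous Real.tanh :=
  continuous_iff_continuousAt.2 fun x => (hasDerivAt_tanh x).continuousAt

lemma tanh_lt_one (x : ℝ) : Real.tanh x < 1 := by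
  rw [Real.tanh_eq_sinh_div_cosh, div_lt_one (Real.cosh_pos x)]
  exact Real.sinh_lt_cosh x

lemma tanh_nonneg {x : ℝ} (hx : 0 ≤ x) : 0 ≤ Real.tanh x := by
  rw [Real.tanh_eq_sinh_div_cosh]
  have : Real.sinh 0 ≤ Real.sinh x := Real.sinh_strictMono.monotone hx
  rw [Real.sinh_zero] at this
  exact div_nonneg this (Real.cosh_pos x).le

lemma tanh_le_self {x : ℝ} (hx : 0 ≤ x) : Real.tanh x ≤ x := by
  have hm : MonotoneOn (fun y => y - Real.tanh y) (Ici 0) := by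
    have hd : ∀ y : ℝ, HasDerivAt (fun y => y - Real.tanh y) (Real.tanh y ^ 2) y := by
      intro y
      have := (hasDerivAt_id y).sub (hasDerivAt_tanh y)
      refine this.congr_deriv ?_; ring
    apply monotoneOn_of_deriv_nonneg (convex_Ici 0)
      (fun y _ => (hd y).continuousAt.continuousWithinAt)
      (fun y _ => ((hd y).differentiableAt).differentiableWithinAt)
    intro y _
    rw [(hd y).deriv]
    positivity
  have := hm (self_mem_Ici) (mem_Ici.2 hx) hx
  simpa [Real.tanh_zero] using this

lemma tanh_cubic_lower {x : ℝ} (hx : 0 ≤ x) : x - x^3/3 ≤ Real.tanh x := by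
  have hm : MonotoneOn (fun y => Real.tanh y - y + y^3/3) (Ici 0) := by
    have hd : ∀ y : ℝ, HasDerivAt (fun y => Real.tanh y - y + y^3/3)
        (y^2 - Real.tanh y ^ 2) y := by
      intro y
      have := ((hasDerivAt_tanh y).sub (hasDerivAt_id y)).add ((hasDerivAt_pow 3 y).div_const 3)
      refine this.congr_deriv ?_
      push_cast; ring
    apply monotoneOn_of_deriv_nonneg (convex_Ici 0)
      (fun y _ => (hd y).continuousAt.continuousWithinAt)
      (fun y _ => ((hd y).differentiableAt).differentiableWithinAt)
    intro y hy
    rw [interior_Ici] at hy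
    rw [(hd y).deriv]
    have h1 : Real.tanh y ≤ y := tanh_le_self (le_of_lt hy)
    have h2 : 0 ≤ Real.tanh y := tanh_nonneg (le_of_lt hy)
    nlinarith
  have := hm (self_mem_Ici) (mem_Ici.2 hx) hx
  simp only [Real.tanh_zero] at this
  nlinarith [this]

lemma tanh_quintic_upper {x : ℝ} (hx : 0 ≤ x) (hx' : x ≤ 3/2) :
    Real.tanh x ≤ x - x^3/3 + (2/15)*x^5 := by
  have hm : MonotoneOn (fun y => y - y^3/3 + (2/15)*y^5 - Real.tanh y) (Icc 0 (3/2)) := by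
    have hd : ∀ y : ℝ, HasDerivAt (fun y => y - y^3/3 + (2/15)*y^5 - Real.tanh y)
        (Real.tanh y ^ 2 - y^2 + (2/3)*y^4) y := by
      intro y
      have := (((hasDerivAt_id y).sub ((hasDerivAt_pow 3 y).div_const 3)).add
        ((hasDerivAt_pow 5 y).const_mul (2/15 : ℝ))).sub (hasDerivAt_tanh y)
      refine this.congr_deriv ?_
      push_cast; ring
    apply monotoneOn_of_deriv_nonneg (convex_Icc 0 (3/2))
      (fun y _ => (hd y).continuousAt.continuousWithinAt)
      (fun y _ => ((hd y).differentiableAt).differentiableWithinAt)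
    intro y hy
    rw [interior_Icc] at hy
    rw [(hd y).deriv]
    have h1 : y - y^3/3 ≤ Real.tanh y := tanh_cubic_lower hy.1.le
    have h0 : 0 ≤ y - y^3/3 := by
      have hyy : y^2 ≤ (3/2)^2 := by nlinarith [hy.1, hy.2]
      have := mul_nonneg hy.1.le (show (0:ℝ) ≤ 1 - y^2/3 by linarith)
      nlinarith [this]
    have h2 : (y - y^3/3)^2 ≤ Real.tanh y ^ 2 := by nlinarith
    nlinarith [pow_nonneg hy.1.le 6]
  have := hm (left_mem_Icc.2 (by norm_num)) (mem_Icc.2 ⟨hx, hx'⟩) hx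
  simp only [Real.tanh_zero] at this
  nlinarith [this]

lemma tanh_div_strictAnti : StrictAntiOn (fun u => Real.tanh u / u) (Ioi 0) := by
  have hd : ∀ x : ℝ, 0 < x → HasDerivAt (fun u => Real.tanh u / u)
      (((1 - Real.tanh x ^ 2) * x - Real.tanh x * 1) / x^2) x := fun x hx =>
    (hasDerivAt_tanh x).div (hasDerivAt_id x) (ne_of_gt hx)
  apply strictAntiOn_of_deriv_neg (convex_Ioi 0)
    (fun x hx => (hd x hx).continuousAt.continuousWithinAt)
  intro x hx
  rw [interior_Ioi] at hx
  rw [(hd x hx).deriv]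
  apply div_neg_of_neg_of_pos _ (pow_pos hx 2)
  have ht : 1 - Real.tanh x ^ 2 = 1 / Real.cosh x ^ 2 := by
    rw [Real.tanh_eq_sinh_div_cosh]
    have hc := (Real.cosh_pos x).ne'
    field_simp
    try linarith [Real.cosh_sq_sub_sinh_sq x]
  have hkey : x < Real.sinh x * Real.cosh x := by
    have h1 : x < Real.sinh x := Real.self_lt_sinh_iff.2 hx
    have h2 : 1 ≤ Real.cosh x := Real.one_le_cosh x
    have hx0 : (0:ℝ) < x := hx
    nlinarith [mul_le_mul_of_nonneg_left h2 (show (0:ℝ) ≤ Real.sinh x by linarith)]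
  rw [ht, Real.tanh_eq_sinh_div_cosh]
  have hc := (Real.cosh_pos x)
  rw [show 1 / Real.cosh x ^ 2 * x - Real.sinh x / Real.cosh x * 1
      = (x - Real.sinh x * Real.cosh x) / Real.cosh x ^ 2 by field_simp]
  exact div_neg_of_neg_of_pos (by linarith) (by positivity)

lemma exists_root {β : ℝ} (hβ : 1 < β) : ∃ u, 0 < u ∧ u = β * Real.tanh u := by
  have hβ0 : (0:ℝ) < β := by linarith
  set s := Real.sqrt ((β-1)/β) with hs
  set u₀ := min 1 s with hu₀def
  have hspos : 0 < s := Real.sqrt_pos.2 (div_pos (by linarith) hβ0)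
  have hu₀pos : 0 < u₀ := lt_min one_pos hspos
  have hu₀sq : β * u₀^2 ≤ β - 1 := by
    have h1 : u₀^2 ≤ s^2 := by
      apply pow_le_pow_left₀ hu₀pos.le (min_le_right _ _)
    have h2 : s^2 = (β-1)/β := Real.sq_sqrt (div_pos (by linarith) hβ0).le
    rw [h2] at h1
    calc β * u₀^2 ≤ β * ((β-1)/β) := by nlinarith
    _ = β - 1 := by field_simp
  have hu₀1 : u₀ ≤ 1 := min_le_left _ _
  have hgu₀ : 0 < β * Real.tanh u₀ - u₀ := by
    have h1 : u₀ - u₀^3/3 ≤ Real.tanh u₀ := tanh_cubic_lower hu₀pos.le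
    have h2 := mul_le_mul_of_nonneg_right hu₀sq hu₀pos.le
    nlinarith [mul_le_mul_of_nonneg_left h1 hβ0.le]
  have hgb : β * Real.tanh (β+1) - (β+1) < 0 := by
    have := tanh_lt_one (β+1)
    nlinarith
  have hle : u₀ ≤ β + 1 := by linarith
  have hcont : ContinuousOn (fun u => β * Real.tanh u - u) (Icc u₀ (β+1)) :=
    ((continuous_const.mul continuous_tanh).sub continuous_id).continuousOn
  have := intermediate_value_Icc' hle hcont
  have h0mem : (0:ℝ) ∈ Icc ((fun u => β * Real.tanh u - u) (β+1))
      ((fun u => β * Real.tanh u - u) u₀) := ⟨hgb.le, hgu₀.le⟩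
  obtain ⟨c, hc, hgc⟩ := this h0mem
  exact ⟨c, lt_of_lt_of_le hu₀pos hc.1, by simp only at hgc; linarith⟩

lemma root_unique {β u₁ u₂ : ℝ} (hβ : 1 < β) (h1 : 0 < u₁) (e1 : u₁ = β * Real.tanh u₁)
    (h2 : 0 < u₂) (e2 : u₂ = β * Real.tanh u₂) : u₁ = u₂ := by
  have hβ0 : (0:ℝ) < β := by linarith
  have f1 : Real.tanh u₁ / u₁ = 1/β := by
    rw [div_eq_div_iff h1.ne' hβ0.ne']
    linear_combination -e1
  have f2 : Real.tanh u₂ / u₂ = 1/β := by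
    rw [div_eq_div_iff h2.ne' hβ0.ne']
    linear_combination -e2
  exact tanh_div_strictAnti.injOn (mem_Ioi.2 h1) (mem_Ioi.2 h2) (f1.trans f2.symm)

lemma sandwich {β u : ℝ} (hβ : 1 < β) (hβ' : β < 11/10) (hu : 0 < u)
    (heq : u = β * Real.tanh u) :
    3*(β-1) ≤ β*u^2 ∧ β*u^2*(1/3 - (4/5)*(β-1)) ≤ β - 1 := by
  have hβ0 : (0:ℝ) < β := by linarith
  have hub : u < β := by
    have := tanh_lt_one u
    nlinarith
  have hu32 : u ≤ 3/2 := by linarith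
  have hlow := tanh_cubic_lower hu.le
  have hhigh := tanh_quintic_upper hu.le hu32
  have hlow' := mul_le_mul_of_nonneg_left hlow hβ0.le
  have hhigh' := mul_le_mul_of_nonneg_left hhigh hβ0.le
  constructor
  · nlinarith [hlow', hu, mul_pos hβ0 hu]
  · have step1 : β*u^2/3 - (2/15)*β*u^4 ≤ β - 1 := by nlinarith [hhigh', hu]
    have hu2small : u^2 ≤ 121/100 := by nlinarith
    have hint : 0 ≤ β * u^2 * (5/4 - u^2) := by
      apply mul_nonneg (by positivity)
      linarith
    have step2 : β*u^2 ≤ 6*(β-1) := by nlinarith [step1, hint]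
    have hu2 : u^2 ≤ 6*(β-1) := by nlinarith [step2, sq_nonneg u]
    have hint2 := mul_le_mul_of_nonneg_left hu2 (mul_nonneg hβ0.le (sq_nonneg u))
    nlinarith [step1, hint2]

end Stmt12Aux

open Stmt12Aux in
/-- For every `β > 1` there is a unique positive fixed point `v₊(β) = √β tanh(√β v₊(β))`,
and `v₊(β)/√(β−1) → √3` as `β → 1⁺`. -/
theorem stmt12 :
    (∀ β : ℝ, 1 < β →
      ∃! v : ℝ, 0 < v ∧ v = Real.sqrt β * Real.tanh (Real.sqrt β * v)) ∧
    ∀ V : ℝ → ℝ,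
      (∀ β : ℝ, 1 < β → 0 < V β ∧ V β = Real.sqrt β * Real.tanh (Real.sqrt β * V β)) →
      Filter.Tendsto (fun β => V β / Real.sqrt (β - 1)) (nhdsWithin 1 (Set.Ioi 1))
        (nhds (Real.sqrt 3)) := by
  have hcorr : ∀ β : ℝ, 1 < β → ∀ v : ℝ, 0 < v →
      (v = Real.sqrt β * Real.tanh (Real.sqrt β * v) ↔
        Real.sqrt β * v = β * Real.tanh (Real.sqrt β * v)) := by
    intro β hβ v hv
    have hβ0 : (0:ℝ) < β := by linarith
    have hs : 0 < Real.sqrt β := Real.sqrt_pos.2 hβ0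
    have hb : Real.sqrt β * Real.sqrt β = β := Real.mul_self_sqrt hβ0.le
    constructor
    · intro h
      calc Real.sqrt β * v = Real.sqrt β * (Real.sqrt β * Real.tanh (Real.sqrt β * v)) := by
            rw [← h]
        _ = β * Real.tanh (Real.sqrt β * v) := by rw [← mul_assoc, hb]
    · intro h
      have : Real.sqrt β * v = Real.sqrt β * (Real.sqrt β * Real.tanh (Real.sqrt β * v)) := by
        rw [← mul_assoc, hb]; exact h
      exact mul_left_cancel₀ hs.ne' this
  constructor
  · intro β hβ
    have hβ0 : (0:ℝ) < β := by linarith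
    have hs : 0 < Real.sqrt β := Real.sqrt_pos.2 hβ0
    obtain ⟨u, hu, hueq⟩ := exists_root hβ
    refine ⟨u / Real.sqrt β, ⟨by positivity, ?_⟩, ?_⟩
    · have h1 : Real.sqrt β * (u / Real.sqrt β) = u := by field_simp
      rw [(hcorr β hβ _ (by positivity)), h1]
      exact hueq
    · rintro v ⟨hv, hveq⟩
      have hweq : Real.sqrt β * v = β * Real.tanh (Real.sqrt β * v) :=
        (hcorr β hβ v hv).1 hveq
      have hw : 0 < Real.sqrt β * v := by positivity
      have huv : Real.sqrt β * v = u := root_unique hβ hw hweq hu hueq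
      field_simp
      linarith [huv]
  · intro V hV
    have hmem : ∀ᶠ β in nhdsWithin (1:ℝ) (Set.Ioi 1), β ∈ Set.Ioo (1:ℝ) (11/10) :=
      Ioo_mem_nhdsGT_of_mem (by norm_num)
    have hfacts : ∀ β : ℝ, β ∈ Set.Ioo (1:ℝ) (11/10) →
        3*(β-1) ≤ β*(Real.sqrt β * V β)^2 ∧
        β*(Real.sqrt β * V β)^2*(1/3 - (4/5)*(β-1)) ≤ β - 1 := by
      intro β hβm
      have hβ := hβm.1
      have hβ0 : (0:ℝ) < β := by linarith
      have hs : 0 < Real.sqrt β := Real.sqrt_pos.2 hβ0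
      obtain ⟨hVpos, hVeq⟩ := hV β hβ
      have hu : 0 < Real.sqrt β * V β := by positivity
      exact sandwich hβ hβm.2 hu ((hcorr β hβ _ hVpos).1 hVeq)
    -- squeeze for the squared ratio
    have hsq : Tendsto (fun β => (Real.sqrt β * V β)^2 / (β-1))
        (nhdsWithin 1 (Set.Ioi 1)) (nhds 3) := by
      apply tendsto_of_tendsto_of_tendsto_of_le_of_le'
        (g := fun β : ℝ => 3/β) (h := fun β : ℝ => 1/(β*(1/3 - (4/5)*(β-1))))
      · have : Tendsto (fun β : ℝ => 3/β) (nhds 1) (nhds (3/1)) :=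
          tendsto_const_nhds.div tendsto_id one_ne_zero
        simpa using this.mono_left nhdsWithin_le_nhds
      · have hden : Tendsto (fun β : ℝ => β*(1/3 - (4/5)*(β-1))) (nhds 1)
            (nhds (1*(1/3 - (4/5)*(1-1)))) :=
          tendsto_id.mul (tendsto_const_nhds.sub
            (tendsto_const_nhds.mul (tendsto_id.sub tendsto_const_nhds)))
        have : Tendsto (fun β : ℝ => 1/(β*(1/3 - (4/5)*(β-1)))) (nhds 1)
            (nhds (1/(1*(1/3 - (4/5)*(1-1))))) :=
          tendsto_const_nhds.div hden (by norm_num)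
        have h3 : (1:ℝ)/(1*(1/3 - (4/5)*(1-1))) = 3 := by norm_num
        rw [h3] at this
        exact this.mono_left nhdsWithin_le_nhds
      · filter_upwards [hmem] with β hβm
        have h := (hfacts β hβm).1
        have hβ1 : (1:ℝ) < β := hβm.1
        rw [div_le_div_iff₀ (by linarith) (by linarith)]
        nlinarith [h]
      · filter_upwards [hmem] with β hβm
        have h := (hfacts β hβm).2
        have hβ1 : (1:ℝ) < β := hβm.1
        have hden : 0 < β*(1/3 - (4/5)*(β-1)) := by nlinarith [hβm.2]
        rw [div_le_div_iff₀ (by linarith) hden]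
        nlinarith [h]
    have hroot : Tendsto (fun β => Real.sqrt ((Real.sqrt β * V β)^2 / (β-1)))
        (nhdsWithin 1 (Set.Ioi 1)) (nhds (Real.sqrt 3)) :=
      (Real.continuous_sqrt.tendsto 3).comp hsq
    have hsb : Tendsto (fun β : ℝ => Real.sqrt β) (nhdsWithin 1 (Set.Ioi 1)) (nhds 1) := by
      have := (Real.continuous_sqrt.tendsto 1).mono_left
        (nhdsWithin_le_nhds : nhdsWithin (1:ℝ) (Set.Ioi 1) ≤ nhds 1)
      simpa using this
    have hdiv : Tendsto (fun β => Real.sqrt ((Real.sqrt β * V β)^2 / (β-1)) / Real.sqrt β)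
        (nhdsWithin 1 (Set.Ioi 1)) (nhds (Real.sqrt 3 / 1)) :=
      hroot.div hsb one_ne_zero
    rw [div_one] at hdiv
    apply hdiv.congr'
    filter_upwards [hmem] with β hβm
    have hβ1 : (1:ℝ) < β := hβm.1
    have hβ0 : (0:ℝ) < β := by linarith
    have hs : 0 < Real.sqrt β := Real.sqrt_pos.2 hβ0
    have hc : 0 < β - 1 := by linarith
    have hVpos := (hV β hβ1).1
    have hsc : 0 < Real.sqrt (β-1) := Real.sqrt_pos.2 hc
    rw [Real.sqrt_div (sq_nonneg _), Real.sqrt_sq (by positivity : 0 ≤ Real.sqrt β * V β)]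
    field_simp
end

section
/- There exists an absolute constant C > 0 such that for every λ > 0 and every y ∈ ℝ, | ∫_ℝ exp( −(t − y)⁴/12 − λ·t²/2 ) dt − √(2π/λ) · exp(−y⁴/12) | ≤ C · λ^{−3/2}. -/
open MeasureTheory Real

noncomputable def phi15 : ℝ → ℝ := fun u => Real.exp (-u ^ 4 / 12)
noncomputable def psi15 : ℝ → ℝ := fun u => -(u ^ 3 / 3) * Real.exp (-u ^ 4 / 12)

lemma hasDerivAt_phi15 (u : ℝ) : HasDerivAt phi15 (psi15 u) u := by
  have h1 : HasDerivAt (fun u : ℝ => -u ^ 4 / 12) (-(u ^ 3 / 3)) u := by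
    have := (hasDerivAt_pow 4 u).neg.div_const 12
    refine this.congr_deriv ?_
    push_cast
    ring
  have := h1.exp
  refine this.congr_deriv ?_
  simp only [psi15]
  ring

lemma hasDerivAt_psi15 (u : ℝ) :
    HasDerivAt psi15 ((u ^ 6 / 9 - u ^ 2) * Real.exp (-u ^ 4 / 12)) u := by
  have h1 : HasDerivAt (fun u : ℝ => -(u ^ 3 / 3)) (-u ^ 2) u := by
    have := ((hasDerivAt_pow 3 u).div_const 3).neg
    refine this.congr_deriv ?_
    push_cast
    ring
  have h2 := h1.mul (hasDerivAt_phi15 u)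
  refine h2.congr_deriv ?_
  simp only [phi15, psi15]
  ring

lemma psi15_deriv_bound (u : ℝ) : ‖(u ^ 6 / 9 - u ^ 2) * Real.exp (-u ^ 4 / 12)‖ ≤ 100 := by
  rw [Real.norm_eq_abs, abs_mul, abs_of_pos (Real.exp_pos _)]
  have hu4 : (0:ℝ) ≤ u ^ 4 := by positivity
  have habs : |u ^ 6 / 9 - u ^ 2| ≤ u ^ 6 / 9 + u ^ 2 := by
    have h6 : (0:ℝ) ≤ u ^ 6 := by positivity
    rw [abs_sub_le_iff]
    constructor <;> nlinarith [sq_nonneg u]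
  rcases le_total (u ^ 2) 4 with hc | hc
  · have hE1 : Real.exp (-u ^ 4 / 12) ≤ 1 := Real.exp_le_one_iff.mpr (by nlinarith)
    have h6 : u ^ 6 ≤ 64 := by nlinarith [sq_nonneg u]
    nlinarith [Real.exp_pos (-u ^ 4 / 12), abs_nonneg (u ^ 6 / 9 - u ^ 2), sq_nonneg u]
  · have hu : u ≠ 0 := by
      intro h; rw [h] at hc; norm_num at hc
    have hu8 : (0:ℝ) < u ^ 8 := by positivity
    have ha : Real.exp (u ^ 4 / 12) = Real.exp (u ^ 4 / 24) * Real.exp (u ^ 4 / 24) := by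
      rw [← Real.exp_add]; ring_nf
    have hb := Real.add_one_le_exp (u ^ 4 / 24)
    have hexp : (0:ℝ) < Real.exp (u ^ 4 / 24) := Real.exp_pos _
    have hcsq : u ^ 8 / 576 ≤ Real.exp (u ^ 4 / 12) := by
      have := mul_le_mul hb hb (by nlinarith) hexp.le
      rw [ha]
      nlinarith [sq_nonneg (u ^ 4)]
    have hd : Real.exp (-u ^ 4 / 12) ≤ 576 / u ^ 8 := by
      have h0 : (0:ℝ) < u ^ 8 / 576 := by positivity
      have : Real.exp (-(u ^ 4 / 12)) ≤ (u ^ 8 / 576)⁻¹ := by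
        rw [Real.exp_neg]
        exact inv_anti₀ h0 hcsq
      rw [show -u ^ 4 / 12 = -(u ^ 4 / 12) by ring]
      rw [inv_div] at this
      exact this
    have hnn : (0:ℝ) ≤ u ^ 6 / 9 + u ^ 2 := by positivity
    have key : (u ^ 6 / 9 + u ^ 2) * Real.exp (-u ^ 4 / 12) ≤ (u ^ 6 / 9 + u ^ 2) * (576 / u ^ 8) := by
      exact mul_le_mul_of_nonneg_left hd hnn
    have hfin : (u ^ 6 / 9 + u ^ 2) * (576 / u ^ 8) ≤ 100 := by
      rw [mul_comm, div_mul_eq_mul_div, div_le_iff₀ hu8]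
      nlinarith [mul_le_mul_of_nonneg_left hc (show (0:ℝ) ≤ u ^ 6 by positivity),
        mul_le_mul_of_nonneg_left hc (show (0:ℝ) ≤ u ^ 4 by positivity),
        mul_le_mul_of_nonneg_left hc (show (0:ℝ) ≤ u ^ 2 by positivity)]
    nlinarith [Real.exp_pos (-u ^ 4 / 12), mul_le_mul_of_nonneg_right habs (Real.exp_pos (-u ^ 4 / 12)).le]

lemma psi15_lip (a b : ℝ) : |psi15 a - psi15 b| ≤ 100 * |a - b| := by
  have := Convex.norm_image_sub_le_of_norm_hasDerivWithin_le
    (f := psi15) (f' := fun u => (u ^ 6 / 9 - u ^ 2) * Real.exp (-u ^ 4 / 12))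
    (s := Set.univ) (fun x _ => (hasDerivAt_psi15 x).hasDerivWithinAt)
    (fun x _ => psi15_deriv_bound x) convex_univ (Set.mem_univ b) (Set.mem_univ a)
  simpa [Real.norm_eq_abs] using this

/-- Uniform-in-`y` Laplace approximation of the convolution of the quartic weight with a
Gaussian of variance `1/λ`. -/
theorem stmt15 : ∃ C > 0, ∀ lam : ℝ, 0 < lam → ∀ y : ℝ,
    |(∫ t : ℝ, Real.exp (-(t - y) ^ 4 / 12 - lam * t ^ 2 / 2)) -
        Real.sqrt (2 * Real.pi / lam) * Real.exp (-y ^ 4 / 12)| ≤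
      C * lam ^ (-(3 : ℝ) / 2) := by
  refine ⟨1600, by norm_num, ?_⟩
  intro lam hlam y
  set G : ℝ → ℝ := fun t => Real.exp (-(lam / 2) * t ^ 2) with hGdef
  have hGc : Continuous G := by fun_prop
  have hGint : Integrable G := integrable_exp_neg_mul_sq (by linarith)
  have hG4 : Integrable (fun t : ℝ => Real.exp (-(lam / 4) * t ^ 2)) :=
    integrable_exp_neg_mul_sq (by linarith)
  have htG : Integrable (fun t : ℝ => t * G t) := integrable_mul_exp_neg_mul_sq (by linarith)
  -- pointwise bound for second moment
  have ht2Gbd : ∀ t : ℝ, t ^ 2 * G t ≤ (4 / lam) * Real.exp (-(lam / 4) * t ^ 2) := by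
    intro t
    have hsplit : G t = Real.exp (-(lam / 4) * t ^ 2) * Real.exp (-(lam / 4) * t ^ 2) := by
      rw [hGdef, ← Real.exp_add]; ring_nf
    have hx := Real.add_one_le_exp (lam / 4 * t ^ 2)
    have hmul : Real.exp (lam / 4 * t ^ 2) * Real.exp (-(lam / 4) * t ^ 2) = 1 := by
      rw [← Real.exp_add]; ring_nf; exact Real.exp_zero
    have hE := Real.exp_pos (-(lam / 4) * t ^ 2)
    have key : t ^ 2 * Real.exp (-(lam / 4) * t ^ 2) ≤ 4 / lam := by
      rw [le_div_iff₀ hlam]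
      nlinarith [mul_le_mul_of_nonneg_right hx hE.le, sq_nonneg t]
    rw [hsplit]
    calc t ^ 2 * (Real.exp (-(lam / 4) * t ^ 2) * Real.exp (-(lam / 4) * t ^ 2))
        = (t ^ 2 * Real.exp (-(lam / 4) * t ^ 2)) * Real.exp (-(lam / 4) * t ^ 2) := by ring
      _ ≤ (4 / lam) * Real.exp (-(lam / 4) * t ^ 2) :=
          mul_le_mul_of_nonneg_right key hE.le
  have ht2G : Integrable (fun t : ℝ => t ^ 2 * G t) := by
    refine (hG4.const_mul (4 / lam)).mono' ?_ ?_
    · exact (continuous_pow 2 |>.mul hGc).aestronglyMeasurable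
    · filter_upwards with t
      rw [Real.norm_eq_abs, abs_of_nonneg (by positivity)]
      exact ht2Gbd t
  -- Gaussian integrals
  have hI0 : (∫ t : ℝ, G t) = Real.sqrt (2 * Real.pi / lam) := by
    rw [hGdef, integral_gaussian]
    congr 1
    field_simp
  have hI1 : (∫ t : ℝ, t * G t) = 0 := by
    have hneg := integral_neg_eq_self (fun t : ℝ => t * G t) (volume : Measure ℝ)
    have heq : (fun t : ℝ => (-t) * G (-t)) = fun t : ℝ => -(t * G t) := by
      funext t
      have : G (-t) = G t := by rw [hGdef]; simp [neg_sq]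
      rw [this]; ring
    rw [heq] at hneg
    rw [integral_neg] at hneg
    linarith
  -- the Taylor remainder
  set h : ℝ → ℝ := fun t => phi15 (t - y) - phi15 (-y) - psi15 (-y) * t with hhdef
  have hderiv : ∀ x : ℝ, HasDerivAt h (psi15 (x - y) - psi15 (-y)) x := by
    intro x
    have hinner : HasDerivAt (fun t : ℝ => t - y) 1 x := (hasDerivAt_id x).sub_const y
    have h1 : HasDerivAt (fun t : ℝ => phi15 (t - y)) (psi15 (x - y)) x := by
      have := (hasDerivAt_phi15 (x - y)).comp x hinner
      exact this.congr_deriv (mul_one _)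
    have h2 : HasDerivAt (fun t : ℝ => psi15 (-y) * t) (psi15 (-y)) x := by
      simpa using (hasDerivAt_id x).const_mul (psi15 (-y))
    exact (h1.sub_const _).sub h2
  have hhbd : ∀ t : ℝ, |h t| ≤ 100 * t ^ 2 := by
    intro t
    have hmem0 : (0:ℝ) ∈ Set.uIcc 0 t := Set.left_mem_uIcc
    have hmemt : t ∈ Set.uIcc 0 t := Set.right_mem_uIcc
    have hb : ∀ x ∈ Set.uIcc (0:ℝ) t, ‖psi15 (x - y) - psi15 (-y)‖ ≤ 100 * |t| := by
      intro x hx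
      rw [Real.norm_eq_abs]
      have h1 : |psi15 (x - y) - psi15 (-y)| ≤ 100 * |x - y - (-y)| := psi15_lip _ _
      have h2 : |x - y - (-y)| = |x| := by congr 1; ring
      have h3 : |x| ≤ |t| := by
        rcases Set.mem_uIcc.mp hx with ⟨h4, h5⟩ | ⟨h4, h5⟩
        · rw [abs_of_nonneg h4]; exact le_trans h5 (le_abs_self t)
        · rw [abs_of_nonpos h5]; exact le_trans (neg_le_neg h4) (neg_le_abs t)
      calc |psi15 (x - y) - psi15 (-y)| ≤ 100 * |x| := by rw [← h2]; exact h1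
        _ ≤ 100 * |t| := by linarith
    have := Convex.norm_image_sub_le_of_norm_hasDerivWithin_le
      (f := h) (f' := fun x => psi15 (x - y) - psi15 (-y)) (s := Set.uIcc 0 t)
      (fun x _ => (hderiv x).hasDerivWithinAt) hb (convex_uIcc _ _) hmem0 hmemt
    have h0 : h 0 = 0 := by simp [hhdef]
    rw [Real.norm_eq_abs, Real.norm_eq_abs, h0, sub_zero, sub_zero] at this
    calc |h t| ≤ 100 * |t| * |t| := this
      _ = 100 * t ^ 2 := by rw [mul_assoc, abs_mul_abs_self]; ring
  -- rewriting the integrand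
  have hrw : ∀ t : ℝ, Real.exp (-(t - y) ^ 4 / 12 - lam * t ^ 2 / 2) = phi15 (t - y) * G t := by
    intro t
    rw [show -(t - y) ^ 4 / 12 - lam * t ^ 2 / 2
        = (-(t - y) ^ 4 / 12) + (-(lam / 2) * t ^ 2) by ring, Real.exp_add]
    rfl
  have hphic : Continuous phi15 := by
    unfold phi15; fun_prop
  have hpsic : Continuous psi15 := by
    unfold psi15; fun_prop
  have hfint : Integrable (fun t : ℝ => phi15 (t - y) * G t) := by
    refine hGint.mono' ?_ ?_
    · exact ((hphic.comp (continuous_id.sub continuous_const)).mul hGc).aestronglyMeasurable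
    · filter_upwards with t
      simp only [phi15, hGdef]
      rw [Real.norm_eq_abs, abs_mul, abs_of_pos (Real.exp_pos _), abs_of_pos (Real.exp_pos _)]
      have h1 : Real.exp (-(t - y) ^ 4 / 12) ≤ 1 :=
        Real.exp_le_one_iff.mpr (by nlinarith [sq_nonneg ((t - y) ^ 2)])
      nlinarith [Real.exp_pos (-(lam / 2) * t ^ 2), Real.exp_pos (-(t - y) ^ 4 / 12)]
  have hhc : Continuous h := by
    simp only [hhdef]
    exact ((hphic.comp (continuous_id.sub continuous_const)).sub continuous_const).sub
      (continuous_const.mul continuous_id)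
  have hhGint : Integrable (fun t : ℝ => h t * G t) := by
    refine (ht2G.const_mul 100).mono' ?_ ?_
    · exact (hhc.mul hGc).aestronglyMeasurable
    · filter_upwards with t
      rw [Real.norm_eq_abs, abs_mul, abs_of_pos (Real.exp_pos _)]
      calc |h t| * G t ≤ (100 * t ^ 2) * G t :=
            mul_le_mul_of_nonneg_right (hhbd t) (Real.exp_pos _).le
        _ = 100 * (t ^ 2 * G t) := by ring
  -- split the integral
  have hsplit : (∫ t : ℝ, phi15 (t - y) * G t)
      = (∫ t : ℝ, h t * G t) + phi15 (-y) * Real.sqrt (2 * Real.pi / lam) := by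
    have heq : ∀ t : ℝ, phi15 (t - y) * G t
        = h t * G t + phi15 (-y) * G t + psi15 (-y) * (t * G t) := by
      intro t; simp only [hhdef]; ring
    calc (∫ t : ℝ, phi15 (t - y) * G t)
        = ∫ t : ℝ, (h t * G t + phi15 (-y) * G t + psi15 (-y) * (t * G t)) := by
          exact integral_congr_ae (Filter.Eventually.of_forall heq)
      _ = (∫ t : ℝ, h t * G t + phi15 (-y) * G t)
            + ∫ t : ℝ, psi15 (-y) * (t * G t) :=
          integral_add (hhGint.add (hGint.const_mul _)) (htG.const_mul _)
      _ = ((∫ t : ℝ, h t * G t) + ∫ t : ℝ, phi15 (-y) * G t)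
            + ∫ t : ℝ, psi15 (-y) * (t * G t) := by
          rw [integral_add hhGint (hGint.const_mul _)]
      _ = (∫ t : ℝ, h t * G t) + phi15 (-y) * Real.sqrt (2 * Real.pi / lam) := by
          rw [integral_const_mul, integral_const_mul, hI0, hI1, mul_zero, add_zero]
  -- put together
  have hphival : phi15 (-y) = Real.exp (-y ^ 4 / 12) := by
    simp only [phi15]
    congr 1
    ring
  have hmain : (∫ t : ℝ, Real.exp (-(t - y) ^ 4 / 12 - lam * t ^ 2 / 2))
      - Real.sqrt (2 * Real.pi / lam) * Real.exp (-y ^ 4 / 12) = ∫ t : ℝ, h t * G t := by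
    have : (∫ t : ℝ, Real.exp (-(t - y) ^ 4 / 12 - lam * t ^ 2 / 2))
        = ∫ t : ℝ, phi15 (t - y) * G t := integral_congr_ae (Filter.Eventually.of_forall hrw)
    rw [this, hsplit, hphival]
    ring
  rw [hmain]
  -- final estimate
  have hsl : (0:ℝ) < Real.sqrt lam := Real.sqrt_pos.mpr hlam
  have hrpow : lam ^ (-(3:ℝ) / 2) = 1 / (lam * Real.sqrt lam) := by
    rw [show (-(3:ℝ) / 2) = -(1 + 1/2) by norm_num, Real.rpow_neg hlam.le,
      Real.rpow_add hlam, Real.rpow_one, ← Real.sqrt_eq_rpow, one_div]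
  have hsqrtbd : Real.sqrt (Real.pi / (lam / 4)) ≤ 4 / Real.sqrt lam := by
    rw [show Real.pi / (lam / 4) = (4 * Real.pi) / lam by field_simp,
      Real.sqrt_div (by positivity) lam]
    have h16 : Real.sqrt (4 * Real.pi) ≤ 4 := by
      nlinarith [Real.sq_sqrt (show (0:ℝ) ≤ 4 * Real.pi by positivity),
        Real.sqrt_nonneg (4 * Real.pi), Real.pi_le_four,
        sq_nonneg (Real.sqrt (4 * Real.pi) - 4)]
    gcongr
  calc |∫ t : ℝ, h t * G t| ≤ ∫ t : ℝ, |h t * G t| := by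
        simpa only [Real.norm_eq_abs] using norm_integral_le_integral_norm (μ := volume) (fun t : ℝ => h t * G t)
    _ ≤ ∫ t : ℝ, 100 * (t ^ 2 * G t) := by
        refine integral_mono hhGint.abs (ht2G.const_mul 100) (fun t => ?_)
        rw [abs_mul, abs_of_pos (Real.exp_pos _)]
        calc |h t| * G t ≤ (100 * t ^ 2) * G t :=
              mul_le_mul_of_nonneg_right (hhbd t) (Real.exp_pos _).le
          _ = 100 * (t ^ 2 * G t) := by ring
    _ = 100 * ∫ t : ℝ, t ^ 2 * G t := integral_const_mul _ _
    _ ≤ 100 * ((4 / lam) * ∫ t : ℝ, Real.exp (-(lam / 4) * t ^ 2)) := by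
        have h1 : (∫ t : ℝ, t ^ 2 * G t)
            ≤ ∫ t : ℝ, (4 / lam) * Real.exp (-(lam / 4) * t ^ 2) :=
          integral_mono ht2G (hG4.const_mul _) ht2Gbd
        rw [integral_const_mul] at h1
        linarith
    _ = 100 * ((4 / lam) * Real.sqrt (Real.pi / (lam / 4))) := by rw [integral_gaussian]
    _ ≤ 100 * ((4 / lam) * (4 / Real.sqrt lam)) := by
        have h2 : (0:ℝ) ≤ 4 / lam := by positivity
        gcongr
    _ = 1600 * (1 / (lam * Real.sqrt lam)) := by field_simp; ring
    _ = 1600 * lam ^ (-(3:ℝ) / 2) := by rw [hrpow]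
end
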